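/- arXiv:1008.3947 — 8 statements merged into one kernel-verified Lean document; each statement's English description precedes it below -/
import Mathlib

section
/- Let W be a non-negative random variable with E W = 1, and let W^e be a random variable defined on the same probability space having the equilibrium distribution with respect to W. Then for any β > 0, the Kolmogorov distance between the law of W and the exponential distribution with mean 1 satisfies d_K(L(W), Exp(1)) ≤ 12β + 2 P(|W^e − W| > β). -/
set_option linter.unusedSectionVars false
open MeasureTheory ProbabilityTheory Set Filter intervalIntegral

section Aux

variable {Ω : Type*} [MeasurableSpace Ω] (μ : Measure Ω) (W : Ω → ℝ)

/-- Tail probability function. -/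
noncomputable def auxFb (t : ℝ) : ℝ := (μ {ω | t < W ω}).toReal

/-- Integral of the tail probability. -/
noncomputable def auxG (x : ℝ) : ℝ := ∫ y in (0:ℝ)..x, auxFb μ W y

variable [IsProbabilityMeasure μ]

lemma auxFb_nonneg (t : ℝ) : 0 ≤ auxFb μ W t := ENNReal.toReal_nonneg

lemma auxFb_le_one (t : ℝ) : auxFb μ W t ≤ 1 := by
  have := prob_le_one (μ := μ) (s := {ω | t < W ω})
  simpa [auxFb] using ENNReal.toReal_mono ENNReal.one_ne_top this

lemma auxFb_antitone : Antitone (auxFb μ W) := by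
  intro s t hst
  refine ENNReal.toReal_mono (measure_ne_top μ _) (measure_mono ?_)
  intro ω hω
  exact lt_of_le_of_lt hst hω

lemma auxFb_intInt (a b : ℝ) : IntervalIntegrable (auxFb μ W) volume a b :=
  (auxFb_antitone μ W).intervalIntegrable

lemma auxG_cont : Continuous (auxG μ W) :=
  continuous_primitive (auxFb_intInt μ W) 0

lemma auxG_sub (a b : ℝ) : auxG μ W b - auxG μ W a = ∫ y in a..b, auxFb μ W y :=
  intervalIntegral.integral_interval_sub_left (auxFb_intInt μ W 0 b) (auxFb_intInt μ W 0 a)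

lemma auxG_zero : auxG μ W 0 = 0 := intervalIntegral.integral_same

lemma auxG_inc_nonneg {a b : ℝ} (hab : a ≤ b) : 0 ≤ auxG μ W b - auxG μ W a := by
  rw [auxG_sub]
  exact intervalIntegral.integral_nonneg hab (fun y _ => auxFb_nonneg μ W y)

lemma auxG_inc_le {a b : ℝ} (hab : a ≤ b) : auxG μ W b - auxG μ W a ≤ b - a := by
  rw [auxG_sub]
  have h := intervalIntegral.integral_mono_on hab (auxFb_intInt μ W a b)
    (_root_.intervalIntegrable_const (c := (1:ℝ))) (fun y _ => auxFb_le_one μ W y)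
  simpa using h

variable {W} in
lemma auxFb_eq (hWmeas : Measurable W) (t : ℝ) :
    auxFb μ W t = 1 - (μ {ω | W ω ≤ t}).toReal := by
  have hc : {ω | t < W ω} = {ω | W ω ≤ t}ᶜ := by ext ω; simp [not_le]
  have hm : MeasurableSet {ω | W ω ≤ t} := hWmeas measurableSet_Iic
  rw [auxFb, hc, prob_compl_eq_one_sub hm,
    ENNReal.toReal_sub_of_le prob_le_one ENNReal.one_ne_top, ENNReal.toReal_one]

variable {W} in
lemma auxF_right_cont (hWmeas : Measurable W) (x : ℝ) :
    ContinuousWithinAt (fun t => (μ {ω | W ω ≤ t}).toReal) (Ici x) x := by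
  have : IsProbabilityMeasure (μ.map W) := Measure.isProbabilityMeasure_map hWmeas.aemeasurable
  have he : (fun t => (μ {ω | W ω ≤ t}).toReal) = fun t => cdf (μ.map W) t := by
    funext t
    rw [cdf_eq_real, measureReal_def, Measure.map_apply hWmeas measurableSet_Iic]
    rfl
  rw [he]
  exact (cdf (μ.map W)).right_continuous x

variable {W} in
lemma auxFb_right_cont (hWmeas : Measurable W) (x : ℝ) :
    ContinuousWithinAt (auxFb μ W) (Ici x) x := by
  have : ContinuousWithinAt (fun t => 1 - (μ {ω | W ω ≤ t}).toReal) (Ici x) x :=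
    continuousWithinAt_const.sub (auxF_right_cont μ hWmeas x)
  refine this.congr (fun y _ => auxFb_eq μ hWmeas y) (auxFb_eq μ hWmeas x)

variable {W} in
lemma auxG_hasDerivWithinAt (hWmeas : Measurable W) (x : ℝ) :
    HasDerivWithinAt (auxG μ W) (auxFb μ W x) (Ici x) x := by
  refine intervalIntegral.integral_hasDerivWithinAt_right (auxFb_intInt μ W 0 x)
    ?_ ?_
  · exact ((auxFb_antitone μ W).measurable.stronglyMeasurable).stronglyMeasurableAtFilter
  · exact (auxFb_right_cont μ hWmeas x).mono Ioi_subset_Ici_self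


end Aux

noncomputable def stdExpCDF (x : ℝ) : ℝ := if 0 ≤ x then 1 - Real.exp (-x) else 0

/-- **Theorem 2.1 (Kolmogorov bound), Peköz–Röllin.**
If `W ≥ 0`, `E W = 1`, and `We` (on the same probability space) has the equilibrium
distribution w.r.t. `W`, i.e. `P(We ≤ x) = ∫_0^x P(W > y) dy` for `x ≥ 0`, then for every
`β > 0` the Kolmogorov distance between `L(W)` and `Exp(1)` is at most
`12 β + 2 P(|We − W| > β)` (stated as the pointwise bound, equivalently the sup bound). -/
theorem kolmogorov_exponential_approx
    {Ω : Type*} [MeasurableSpace Ω] (μ : Measure Ω) [IsProbabilityMeasure μ]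
    (W We : Ω → ℝ) (hWmeas : Measurable W) (hWemeas : Measurable We)
    (hWnn : ∀ ω, 0 ≤ W ω) (hWint : Integrable W μ)
    (hEW : ∫ ω, W ω ∂μ = 1)
    (hWe : ∀ x : ℝ, 0 ≤ x →
      (μ {ω | We ω ≤ x}).toReal = ∫ y in (0:ℝ)..x, (μ {ω | y < W ω}).toReal)
    (β : ℝ) (hβ : 0 < β) :
    ∀ x : ℝ, |(μ {ω | W ω ≤ x}).toReal - stdExpCDF x| ≤
      12 * β + 2 * (μ {ω | β < |We ω - W ω|}).toReal := by
  intro x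
  set p : ℝ := (μ {ω | β < |We ω - W ω|}).toReal with hp
  have hp0 : 0 ≤ p := ENNReal.toReal_nonneg
  by_cases hx : 0 ≤ x
  swap
  · have h1 : {ω | W ω ≤ x} = (∅ : Set Ω) := by
      ext ω
      simp only [mem_setOf_eq, mem_empty_iff_false, iff_false, not_le]
      exact lt_of_lt_of_le (lt_of_not_ge hx) (hWnn ω)
    rw [h1, stdExpCDF, if_neg hx]
    simp only [measure_empty, ENNReal.toReal_zero, sub_zero, abs_zero]
    positivity
  -- Notation
  set F : ℝ → ℝ := fun t => (μ {ω | W ω ≤ t}).toReal with hFdef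
  set δ : ℝ := β + p with hδ
  have hF0 : ∀ t, 0 ≤ F t := fun t => ENNReal.toReal_nonneg
  -- hWe in terms of auxG
  have hWeG : ∀ t : ℝ, 0 ≤ t → (μ {ω | We ω ≤ t}).toReal = auxG μ W t := by
    intro t ht
    rw [hWe t ht]; rfl
  -- coupling inequality 1
  have hcoup1 : ∀ t : ℝ, 0 ≤ t → F t ≤ auxG μ W (t + β) + p := by
    intro t ht
    have hsub : {ω | W ω ≤ t} ⊆ {ω | We ω ≤ t + β} ∪ {ω | β < |We ω - W ω|} := by
      intro ω hω
      by_cases hb : β < |We ω - W ω|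
      · exact Or.inr hb
      · push_neg at hb
        left
        have h2 := (abs_le.mp hb).2
        simp only [mem_setOf_eq] at hω ⊢
        linarith
    have h1 : μ {ω | W ω ≤ t} ≤ μ {ω | We ω ≤ t + β} + μ {ω | β < |We ω - W ω|} :=
      le_trans (measure_mono hsub) (measure_union_le _ _)
    have h2 : F t ≤ ((μ {ω | We ω ≤ t + β}) + μ {ω | β < |We ω - W ω|}).toReal :=
      ENNReal.toReal_mono (by finiteness) h1
    rw [ENNReal.toReal_add (measure_ne_top μ _) (measure_ne_top μ _),
      hWeG (t + β) (by linarith)] at h2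
    exact h2
  -- coupling inequality 2
  have hcoup2 : ∀ t : ℝ, β ≤ t → auxG μ W (t - β) ≤ F t + p := by
    intro t ht
    have hsub : {ω | We ω ≤ t - β} ⊆ {ω | W ω ≤ t} ∪ {ω | β < |We ω - W ω|} := by
      intro ω hω
      by_cases hb : β < |We ω - W ω|
      · exact Or.inr hb
      · push_neg at hb
        left
        have h2 := (abs_le.mp hb).1
        simp only [mem_setOf_eq] at hω ⊢
        linarith
    have h1 : μ {ω | We ω ≤ t - β} ≤ μ {ω | W ω ≤ t} + μ {ω | β < |We ω - W ω|} :=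
      le_trans (measure_mono hsub) (measure_union_le _ _)
    have h2 : (μ {ω | We ω ≤ t - β}).toReal ≤
        ((μ {ω | W ω ≤ t}) + μ {ω | β < |We ω - W ω|}).toReal :=
      ENNReal.toReal_mono (by finiteness) h1
    rw [ENNReal.toReal_add (measure_ne_top μ _) (measure_ne_top μ _)] at h2
    rw [hWeG (t - β) (by linarith)] at h2
    exact h2
  -- |F - G| ≤ δ on [0, ∞)
  have hFG : ∀ t : ℝ, 0 ≤ t → |F t - auxG μ W t| ≤ δ := by
    intro t ht
    rw [abs_sub_le_iff]
    constructor
    · have h1 := hcoup1 t ht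
      have h2 := auxG_inc_le μ W (show t ≤ t + β by linarith)
      linarith
    · by_cases hbt : β ≤ t
      · have h1 := hcoup2 t hbt
        have h2 := auxG_inc_le μ W (show t - β ≤ t by linarith)
        linarith
      · push_neg at hbt
        have h2 := auxG_inc_le μ W ht
        have h3 := auxG_zero μ W
        have := hF0 t
        linarith
  -- the function H and its right derivative
  set H : ℝ → ℝ := fun t => Real.exp t * (auxG μ W t - (1 - Real.exp (-t))) with hHdef
  have hH0 : H 0 = 0 := by simp [hHdef, auxG_zero μ W]
  have hHderiv : ∀ t : ℝ,
      HasDerivWithinAt H (Real.exp t * (auxG μ W t - F t)) (Ici t) t := by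
    intro t
    have hexp : HasDerivWithinAt Real.exp (Real.exp t) (Ici t) t :=
      (Real.hasDerivAt_exp t).hasDerivWithinAt
    have hexpneg : HasDerivWithinAt (fun s => Real.exp (-s)) (-Real.exp (-t)) (Ici t) t := by
      have h1 : HasDerivAt (fun s : ℝ => Real.exp (-s)) (Real.exp (-t) * (-1)) t :=
        (Real.hasDerivAt_exp (-t)).comp t (hasDerivAt_neg t)
      simpa using h1.hasDerivWithinAt
    have hD : HasDerivWithinAt (fun s => auxG μ W s - (1 - Real.exp (-s)))
        (auxFb μ W t - Real.exp (-t)) (Ici t) t := by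
      have := (auxG_hasDerivWithinAt μ hWmeas t).sub
        (((hasDerivWithinAt_const t (Ici t) (1:ℝ)).sub hexpneg))
      simp at this; exact this
    have hmul := hexp.mul hD
    have heq : Real.exp t * (auxFb μ W t - Real.exp (-t)) +
        Real.exp t * (auxG μ W t - (1 - Real.exp (-t))) =
        Real.exp t * (auxG μ W t - F t) := by
      rw [auxFb_eq μ hWmeas t]
      simp only [hFdef]
      ring
    rw [hHdef]
    exact hmul.congr_deriv (by rw [← heq]; ring)
  -- Gronwall-type bound: |H x| ≤ δ * (exp x - 1)
  have hHcont : ContinuousOn H (Icc 0 x) :=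
    (Real.continuous_exp.mul ((auxG_cont μ W).sub
      (continuous_const.sub (Real.continuous_exp.comp continuous_neg)))).continuousOn
  have hBderiv : ∀ t ∈ Ico 0 x, HasDerivWithinAt (fun s => δ * (Real.exp s - 1))
      (δ * Real.exp t) (Ici t) t := by
    intro t _
    exact (((Real.hasDerivAt_exp t).sub_const 1).const_mul δ).hasDerivWithinAt
  have hBcont : ContinuousOn (fun s => δ * (Real.exp s - 1)) (Icc 0 x) :=
    (continuous_const.mul (Real.continuous_exp.sub continuous_const)).continuousOn
  have hHup : H x ≤ δ * (Real.exp x - 1) := by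
    have := image_le_of_deriv_right_le_deriv_boundary hHcont
      (fun t _ => hHderiv t) (by simp [hH0]) hBcont hBderiv ?_ (right_mem_Icc.mpr hx)
    · exact this
    · intro t ht
      have h1 : auxG μ W t - F t ≤ δ := by
        have := hFG t ht.1
        rw [abs_sub_le_iff] at this
        linarith [this.2]
      have h2 : (0:ℝ) < Real.exp t := Real.exp_pos t
      nlinarith
  have hHlo : -H x ≤ δ * (Real.exp x - 1) := by
    have := image_le_of_deriv_right_le_deriv_boundary (hHcont.neg)
      (fun t _ => (hHderiv t).neg) (by simp [hH0]) hBcont hBderiv ?_ (right_mem_Icc.mpr hx)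
    · exact this
    · intro t ht
      have h1 : F t - auxG μ W t ≤ δ := by
        have := hFG t ht.1
        rw [abs_sub_le_iff] at this
        linarith [this.1]
      have h2 : (0:ℝ) < Real.exp t := Real.exp_pos t
      nlinarith
  -- deduce |G x - (1 - exp (-x))| ≤ δ
  have hGA : |auxG μ W x - (1 - Real.exp (-x))| ≤ δ := by
    have h2 : (0:ℝ) < Real.exp x := Real.exp_pos x
    have h3 : Real.exp x * Real.exp (-x) = 1 := by
      rw [← Real.exp_add]; simp
    rw [abs_le]
    constructor
    · rw [hHdef] at hHlo
      simp only at hHlo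
      nlinarith
    · rw [hHdef] at hHup
      simp only at hHup
      nlinarith
  -- final assembly
  have hstd : stdExpCDF x = 1 - Real.exp (-x) := if_pos hx
  have htri : |F x - stdExpCDF x| ≤ |F x - auxG μ W x| + |auxG μ W x - (1 - Real.exp (-x))| := by
    rw [hstd]
    exact abs_sub_le _ _ _
  have h4 := hFG x hx
  have hfinal : |F x - stdExpCDF x| ≤ 2 * δ := by linarith
  calc |F x - stdExpCDF x| ≤ 2 * δ := hfinal
    _ = 2 * β + 2 * p := by rw [hδ]; ring
    _ ≤ 12 * β + 2 * p := by linarith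
end

section
/- Let X be a non-negative random variable with finite positive mean, and define the distribution function F^e(x) = (1/E X) ∫_0^x P(X > y) dy for x ≥ 0 and F^e(x) = 0 for x < 0. If X^e is a random variable with distribution function F^e, then for every Lipschitz-continuous function f one has E f(X) − f(0) = E X · E f'(X^e). -/
open MeasureTheory ProbabilityTheory Filter Topology Set
open scoped ENNReal NNReal

lemma slope_seq_tendsto {F : ℝ → ℝ} {x d : ℝ} (h : HasDerivAt F d x) :
    Tendsto (fun n : ℕ => (F (x + ((n:ℝ)+1)⁻¹) - F x) * ((n:ℝ)+1)) atTop (𝓝 d) := by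
  have hs := hasDerivAt_iff_tendsto_slope.mp h
  have hseq : Tendsto (fun n : ℕ => x + ((n:ℝ)+1)⁻¹) atTop (𝓝[≠] x) := by
    rw [tendsto_nhdsWithin_iff]
    constructor
    · have : Tendsto (fun n : ℕ => ((n:ℝ)+1)⁻¹) atTop (𝓝 0) := by
        simpa using tendsto_one_div_add_atTop_nhds_zero_nat (𝕜 := ℝ)
      simpa using tendsto_const_nhds.add this
    · filter_upwards with n
      have : (0:ℝ) < ((n:ℝ)+1)⁻¹ := by positivity
      simp only [mem_compl_iff, mem_singleton_iff]
      intro hEq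
      nlinarith [hEq]
  have := hs.comp hseq
  convert this using 2 with n
  have hpos : ((n:ℝ)+1) ≠ 0 := by positivity
  simp only [Function.comp_apply, slope_def_field]
  field_simp
  ring

lemma lipschitz_ftc {K : NNReal} {f : ℝ → ℝ} (hf : LipschitzWith K f) (a b : ℝ) :
    ∫ y in a..b, deriv f y = f b - f a := by
  have hcont : Continuous f := hf.continuous
  set F : ℝ → ℝ := fun u => ∫ t in (0:ℝ)..u, f t with hFdef
  have hF : ∀ u : ℝ, HasDerivAt F (f u) u := fun u =>
    intervalIntegral.integral_hasDerivAt_right (hcont.intervalIntegrable _ _)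
      (hcont.stronglyMeasurableAtFilter _ _) hcont.continuousAt
  set g : ℕ → ℝ → ℝ := fun n x => (f (x + ((n:ℝ)+1)⁻¹) - f x) * ((n:ℝ)+1) with hgdef
  -- integral of g n over a..b
  have hgint : ∀ n : ℕ, ∫ x in a..b, g n x
      = ((F (b + ((n:ℝ)+1)⁻¹) - F b) - (F (a + ((n:ℝ)+1)⁻¹) - F a)) * ((n:ℝ)+1) := by
    intro n
    set h : ℝ := ((n:ℝ)+1)⁻¹ with hh
    have h1 : ∫ x in a..b, f (x + h) = ∫ x in (a+h)..(b+h), f x :=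
      intervalIntegral.integral_comp_add_right f h
    have hint1 : IntervalIntegrable (fun x => f (x + h)) volume a b :=
      (hcont.comp (continuous_id.add continuous_const)).intervalIntegrable _ _
    have hint2 : IntervalIntegrable f volume a b := hcont.intervalIntegrable _ _
    have key : ∀ u v : ℝ, ∫ x in u..v, f x = F v - F u := by
      intro u v
      rw [hFdef]
      simp only
      rw [← intervalIntegral.integral_add_adjacent_intervals
        (hcont.intervalIntegrable 0 u) (hcont.intervalIntegrable u v)]
      ring
    calc ∫ x in a..b, g n x
        = ∫ x in a..b, ((f (x + h) - f x) * ((n:ℝ)+1)) := rfl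
      _ = (∫ x in a..b, (f (x + h) - f x)) * ((n:ℝ)+1) := by
          rw [← intervalIntegral.integral_mul_const]
      _ = ((∫ x in a..b, f (x + h)) - ∫ x in a..b, f x) * ((n:ℝ)+1) := by
          rw [intervalIntegral.integral_sub hint1 hint2]
      _ = ((F (b+h) - F (a+h)) - (F b - F a)) * ((n:ℝ)+1) := by
          rw [h1, key, key]
      _ = ((F (b + h) - F b) - (F (a + h) - F a)) * ((n:ℝ)+1) := by ring
  -- limit of the integrals via F
  have hlim1 : Tendsto (fun n : ℕ => ∫ x in a..b, g n x) atTop (𝓝 (f b - f a)) := by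
    have hb := slope_seq_tendsto (hF b)
    have ha := slope_seq_tendsto (hF a)
    have := hb.sub ha
    refine Tendsto.congr (fun n => ?_) this
    rw [hgint n]; ring
  -- limit via dominated convergence
  have hlim2 : Tendsto (fun n : ℕ => ∫ x in a..b, g n x) atTop
      (𝓝 (∫ x in a..b, deriv f x)) := by
    apply intervalIntegral.tendsto_integral_filter_of_dominated_convergence (fun _ => (K:ℝ))
    · filter_upwards with n
      exact ((hcont.comp (continuous_id.add continuous_const)).sub hcont).mul
        continuous_const |>.aestronglyMeasurable
    · filter_upwards with n
      filter_upwards with x _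
      have hpos : (0:ℝ) < ((n:ℝ)+1) := by positivity
      have hb : |f (x + ((n:ℝ)+1)⁻¹) - f x| ≤ (K:ℝ) * ((n:ℝ)+1)⁻¹ := by
        have := hf.dist_le_mul (x + ((n:ℝ)+1)⁻¹) x
        simpa [Real.dist_eq, abs_of_pos hpos] using this
      have : ‖g n x‖ = |f (x + ((n:ℝ)+1)⁻¹) - f x| * ((n:ℝ)+1) := by
        rw [hgdef]; simp [abs_mul, abs_of_pos hpos]
      rw [this]
      calc |f (x + ((n:ℝ)+1)⁻¹) - f x| * ((n:ℝ)+1)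
          ≤ ((K:ℝ) * ((n:ℝ)+1)⁻¹) * ((n:ℝ)+1) := by
            apply mul_le_mul_of_nonneg_right hb hpos.le
        _ = (K:ℝ) := by field_simp
    · exact intervalIntegrable_const
    · have hae : ∀ᵐ x : ℝ, DifferentiableAt ℝ f x := hf.ae_differentiableAt_of_real
      filter_upwards [hae] with x hx _
      exact slope_seq_tendsto hx.hasDerivAt
  exact tendsto_nhds_unique hlim2 hlim1

/-- **Characterization of the equilibrium distribution.**
Let `X ≥ 0` with `0 < E X < ∞` and let `Xe` have the equilibrium (stationary renewal)
distribution w.r.t. `X`, i.e. `P(Xe ≤ x) = (1/E X) ∫_0^x P(X > y) dy` for `x ≥ 0` and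
`P(Xe ≤ x) = 0` for `x < 0`. Then for every Lipschitz-continuous `f : ℝ → ℝ`,
`E f(X) − f(0) = E X · E f'(Xe)` (with `f'` the a.e.-defined derivative `deriv f`). -/
theorem equilibrium_characterization
    {Ω : Type*} [MeasurableSpace Ω] (μ : Measure Ω) [IsProbabilityMeasure μ]
    (X Xe : Ω → ℝ) (hXmeas : Measurable X) (hXemeas : Measurable Xe)
    (hXnn : ∀ ω, 0 ≤ X ω) (hXint : Integrable X μ)
    (hEX : 0 < ∫ ω, X ω ∂μ)
    (hXe : ∀ x : ℝ, 0 ≤ x → (μ {ω | Xe ω ≤ x}).toReal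
        = (∫ y in (0:ℝ)..x, (μ {ω | y < X ω}).toReal) / (∫ ω, X ω ∂μ))
    (hXe' : ∀ x : ℝ, x < 0 → μ {ω | Xe ω ≤ x} = 0) :
    ∀ (K : NNReal) (f : ℝ → ℝ), LipschitzWith K f →
      (∫ ω, f (X ω) ∂μ) - f 0 = (∫ ω, X ω ∂μ) * ∫ ω, deriv f (Xe ω) ∂μ := by
  intro K f hf
  set m := ∫ ω, X ω ∂μ with hm
  have hm0 : 0 < m := hEX
  set G : ℝ → ℝ := fun y => (μ {ω | y < X ω}).toReal with hG
  set g : ℝ → ℝ := deriv f with hg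
  have hXnn' : 0 ≤ᵐ[μ] X := Filter.Eventually.of_forall hXnn
  have hGmeasE : Measurable fun y : ℝ => μ {ω | y < X ω} :=
    Antitone.measurable (fun y z hyz => measure_mono (fun ω h => lt_of_le_of_lt hyz h))
  have hGmeas : Measurable G := hGmeasE.ennreal_toReal
  have hGnn : ∀ y, 0 ≤ G y := fun y => ENNReal.toReal_nonneg
  have hGle : ∀ y, G y ≤ 1 := by
    intro y
    have h1 : μ {ω | y < X ω} ≤ 1 := prob_le_one
    have := ENNReal.toReal_mono ENNReal.one_ne_top h1
    simpa using this
  -- layer cake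
  have hlayerE : ∫⁻ y in Set.Ioi (0:ℝ), μ {ω | y < X ω} = ENNReal.ofReal m := by
    rw [← lintegral_eq_lintegral_meas_lt μ hXnn' hXint.aemeasurable]
    exact (ofReal_integral_eq_lintegral_ofReal hXint hXnn').symm
  -- density measure
  set ρ : ℝ → NNReal := fun y => Real.toNNReal (G y / m) with hρ
  have hρmeas : Measurable ρ := measurable_real_toNNReal.comp (hGmeas.div_const m)
  set ν : Measure ℝ := (volume.restrict (Set.Ioi 0)).withDensity (fun y => (ρ y : ℝ≥0∞))
    with hν
  have hcoe : ∀ y, ((ρ y : ℝ≥0∞)) = ENNReal.ofReal (G y / m) := fun y => rfl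
  have hIic : ∀ x : ℝ, 0 ≤ x →
      ν (Set.Iic x) = ENNReal.ofReal ((∫ y in (0:ℝ)..x, G y) / m) := by
    intro x hx
    rw [hν, withDensity_apply _ measurableSet_Iic, Measure.restrict_restrict measurableSet_Iic]
    have hset : Set.Iic x ∩ Set.Ioi 0 = Set.Ioc 0 x := by
      ext y; simp [Set.mem_Ioc, and_comm]
    rw [hset]
    have hint : IntegrableOn (fun y => G y / m) (Set.Ioc 0 x) volume := by
      apply Integrable.mono' (integrable_const (1/m))
        ((hGmeas.div_const m).aestronglyMeasurable)
      filter_upwards with y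
      rw [Real.norm_eq_abs, abs_of_nonneg (div_nonneg (hGnn y) hm0.le)]
      exact (div_le_div_iff_of_pos_right hm0).mpr (hGle y)
    have hnn : 0 ≤ᵐ[volume.restrict (Set.Ioc (0:ℝ) x)] fun y => G y / m :=
      Filter.Eventually.of_forall fun y => div_nonneg (hGnn y) hm0.le
    simp only [hcoe]
    rw [← ofReal_integral_eq_lintegral_ofReal hint hnn]
    congr 1
    rw [intervalIntegral.integral_of_le hx, integral_div]
  -- ν is a probability measure
  have hν_univ : ν Set.univ = 1 := by
    rw [hν, withDensity_apply _ MeasurableSet.univ, Measure.restrict_univ]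
    calc ∫⁻ y in Set.Ioi (0:ℝ), ((ρ y : ℝ≥0∞))
        = ∫⁻ y in Set.Ioi (0:ℝ), μ {ω | y < X ω} * (ENNReal.ofReal m)⁻¹ := by
          apply setLIntegral_congr_fun measurableSet_Ioi ?_
          intro y _
          dsimp only
          rw [hcoe, ENNReal.ofReal_div_of_pos hm0, div_eq_mul_inv]
          congr 1
          rw [hG]
          exact ENNReal.ofReal_toReal (measure_ne_top μ _)
      _ = (∫⁻ y in Set.Ioi (0:ℝ), μ {ω | y < X ω}) * (ENNReal.ofReal m)⁻¹ :=
          lintegral_mul_const _ hGmeasE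
      _ = 1 := by
          rw [hlayerE]
          exact ENNReal.mul_inv_cancel (ENNReal.ofReal_pos.mpr hm0).ne' ENNReal.ofReal_ne_top
  have hνprob : IsProbabilityMeasure ν := ⟨hν_univ⟩
  -- the law of Xe is ν
  have hprob_map : IsProbabilityMeasure (Measure.map Xe μ) :=
    Measure.isProbabilityMeasure_map hXemeas.aemeasurable
  have hmap : Measure.map Xe μ = ν := by
    refine Measure.ext_of_Iic _ _ fun x => ?_
    rw [Measure.map_apply hXemeas measurableSet_Iic]
    have hpre : Xe ⁻¹' Set.Iic x = {ω | Xe ω ≤ x} := rfl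
    rw [hpre]
    rcases lt_or_ge x 0 with hx | hx
    · rw [hXe' x hx, hν, withDensity_apply _ measurableSet_Iic,
        Measure.restrict_restrict measurableSet_Iic]
      have hempty : Set.Iic x ∩ Set.Ioi 0 = (∅ : Set ℝ) := by
        ext y
        simp only [Set.mem_inter_iff, Set.mem_Iic, Set.mem_Ioi, Set.mem_empty_iff_false,
          iff_false, not_and]
        intro h1; linarith
      rw [hempty]
      simp
    · rw [hIic x hx, ← ENNReal.ofReal_toReal (measure_ne_top μ {ω | Xe ω ≤ x}), hXe x hx]
  -- bound on the derivative
  have hgmeas : Measurable g := measurable_deriv f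
  have hgbound : ∀ y, |g y| ≤ (K:ℝ) := by
    intro y
    have := norm_deriv_le_of_lipschitz hf (x₀ := y)
    simpa [hg, Real.norm_eq_abs] using this
  -- express E g(Xe) via the density
  have hXeInt : ∫ ω, g (Xe ω) ∂μ = ∫ y, g y ∂ν := by
    rw [← hmap, integral_map hXemeas.aemeasurable hgmeas.aestronglyMeasurable]
  have hνInt : ∫ y, g y ∂ν = ∫ y in Set.Ioi (0:ℝ), (G y / m) * g y := by
    rw [hν, integral_withDensity_eq_integral_smul hρmeas]
    apply integral_congr_ae (Filter.Eventually.of_forall fun y => ?_)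
    rw [NNReal.smul_def, hρ]
    simp only
    rw [Real.coe_toNNReal _ (div_nonneg (hGnn y) hm0.le), smul_eq_mul]
  have hstep6 : m * ∫ ω, g (Xe ω) ∂μ = ∫ y in Set.Ioi (0:ℝ), G y * g y := by
    rw [hXeInt, hνInt, ← integral_const_mul]
    apply integral_congr_ae (Filter.Eventually.of_forall fun y => ?_)
    field_simp
  -- Fubini
  set μ' : Measure ℝ := volume.restrict (Set.Ioi (0:ℝ)) with hμ'
  set H : ℝ → Ω → ℝ := fun y ω => Set.indicator {ω' | y < X ω'} (fun _ => g y) ω with hH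
  have hSmeas : MeasurableSet {p : ℝ × Ω | p.1 < X p.2} :=
    measurableSet_lt measurable_fst (hXmeas.comp measurable_snd)
  have hHeq : Function.uncurry H
      = Set.indicator {p : ℝ × Ω | p.1 < X p.2} (fun p => g p.1) := by
    ext ⟨y, ω⟩
    by_cases hc : y < X ω <;>
      simp [Function.uncurry, hH, Set.indicator, hc]
  have hHmeas : AEStronglyMeasurable (Function.uncurry H) (μ'.prod μ) := by
    rw [hHeq]
    exact (((hgmeas.comp measurable_fst).indicator hSmeas).aestronglyMeasurable)
  have hHint : Integrable (Function.uncurry H) (μ'.prod μ) := by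
    refine ⟨hHmeas, ?_⟩
    show (∫⁻ p, ‖Function.uncurry H p‖₊ ∂(μ'.prod μ)) < ⊤
    calc ∫⁻ p, ‖Function.uncurry H p‖₊ ∂(μ'.prod μ)
        ≤ ∫⁻ p, Set.indicator {p : ℝ × Ω | p.1 < X p.2} (fun _ => (K:ℝ≥0∞)) p
            ∂(μ'.prod μ) := by
          apply lintegral_mono fun p => ?_
          rcases p with ⟨y, ω⟩
          by_cases hc : y < X ω
          · simp only [hHeq, Set.indicator, Set.mem_setOf_eq, hc, if_true]
            have : ‖g y‖₊ ≤ K := by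
              rw [← NNReal.coe_le_coe]
              simpa [Real.norm_eq_abs] using hgbound y
            exact_mod_cast this
          · simp [Function.uncurry, hH, Set.indicator, hc]
      _ = (K:ℝ≥0∞) * (μ'.prod μ) {p : ℝ × Ω | p.1 < X p.2} := by
          rw [lintegral_indicator hSmeas, setLIntegral_const]
      _ < ⊤ := by
          rw [Measure.prod_apply hSmeas]
          have : ∀ y : ℝ, (Prod.mk y ⁻¹' {p : ℝ × Ω | p.1 < X p.2}) = {ω | y < X ω} := by
            intro y; rfl
          simp only [this]
          rw [hμ', hlayerE]
          exact ENNReal.mul_lt_top ENNReal.coe_lt_top ENNReal.ofReal_lt_top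
  have hswap := MeasureTheory.integral_integral_swap hHint
  have hinner1 : ∀ y : ℝ, ∫ ω, H y ω ∂μ = G y * g y := by
    intro y
    rw [hH]
    simp only
    rw [integral_indicator_const (g y) (measurableSet_lt measurable_const hXmeas : MeasurableSet {ω | y < X ω})]
    rw [smul_eq_mul]
    rfl
  have hinner2 : ∀ ω, ∫ y, H y ω ∂μ' = ∫ y in (0:ℝ)..(X ω), g y := by
    intro ω
    have heq : (fun y => H y ω) = Set.indicator (Set.Iio (X ω)) g := by
      funext y
      by_cases hc : y < X ω <;>
        simp [hH, Set.indicator, Set.mem_Iio, hc]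
    rw [heq, integral_indicator measurableSet_Iio, hμ',
      Measure.restrict_restrict measurableSet_Iio]
    have hset : Set.Iio (X ω) ∩ Set.Ioi 0 = Set.Ioo 0 (X ω) := by
      ext y; simp [Set.mem_Ioo, and_comm]
    rw [hset, ← MeasureTheory.integral_Ioc_eq_integral_Ioo,
      ← intervalIntegral.integral_of_le (hXnn ω)]
  have hstep7 : ∫ y in Set.Ioi (0:ℝ), G y * g y
      = ∫ ω, (∫ y in (0:ℝ)..(X ω), g y) ∂μ := by
    calc ∫ y in Set.Ioi (0:ℝ), G y * g y
        = ∫ y, (∫ ω, H y ω ∂μ) ∂μ' :=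
          integral_congr_ae (Filter.Eventually.of_forall fun y => (hinner1 y).symm)
      _ = ∫ ω, (∫ y, H y ω ∂μ') ∂μ := hswap
      _ = ∫ ω, (∫ y in (0:ℝ)..(X ω), g y) ∂μ :=
          integral_congr_ae (Filter.Eventually.of_forall fun ω => hinner2 ω)
  -- FTC and conclusion
  have hFTC : ∀ ω, ∫ y in (0:ℝ)..(X ω), g y = f (X ω) - f 0 := fun ω =>
    lipschitz_ftc hf 0 (X ω)
  have hfXint : Integrable (fun ω => f (X ω)) μ := by
    apply Integrable.mono' ((integrable_const |f 0|).add (hXint.const_mul (K:ℝ)))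
      ((hf.continuous.measurable.comp hXmeas).aestronglyMeasurable)
    filter_upwards with ω
    have h1 : |f (X ω) - f 0| ≤ (K:ℝ) * (X ω) := by
      have h2 := hf.dist_le_mul (X ω) 0
      rw [Real.dist_eq, Real.dist_eq, sub_zero, abs_of_nonneg (hXnn ω)] at h2
      exact h2
    rw [Real.norm_eq_abs]
    calc |f (X ω)| = |f 0 + (f (X ω) - f 0)| := by ring_nf
      _ ≤ |f 0| + |f (X ω) - f 0| := abs_add_le _ _
      _ ≤ |f 0| + (K:ℝ) * X ω := by linarith
  calc (∫ ω, f (X ω) ∂μ) - f 0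
      = ∫ ω, (f (X ω) - f 0) ∂μ := by
        rw [integral_sub hfXint (integrable_const _), integral_const]
        simp
    _ = ∫ ω, (∫ y in (0:ℝ)..(X ω), g y) ∂μ :=
        integral_congr_ae (Filter.Eventually.of_forall fun ω => (hFTC ω).symm)
    _ = ∫ y in Set.Ioi (0:ℝ), G y * g y := hstep7.symm
    _ = m * ∫ ω, g (Xe ω) ∂μ := hstep6.symm
end

section
/- For any integer n ≥ 1 and any real m > 1, the quantity η(m,n) = (1−m)/(2(1−m^n)) + ((1−m)^2/(m(1−m^n))) · Σ_{j=1}^n m^{2j}/(1−m^j) satisfies η(m,n) ≤ 6(m−1) + (6.5 + log n)/n. -/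
open Finset

private lemma pow_sub_one_pos {m : ℝ} (hm : 1 < m) {j : ℕ} (hj : 1 ≤ j) :
    0 < m ^ j - 1 := by
  have := one_lt_pow₀ hm (by omega : j ≠ 0)
  linarith

private lemma bernoulli_aux {m : ℝ} (hm : 1 < m) (j : ℕ) :
    (j : ℝ) * (m - 1) ≤ m ^ j - 1 := by
  have h := one_add_mul_le_pow (by linarith : (-2:ℝ) ≤ m - 1) j
  have : (1 : ℝ) + j * (m-1) ≤ m ^ j := by simpa using h
  linarith

/-- **Bound (5) on η(m,n) for m > 1, Peköz–Röllin.**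
For any integer `n ≥ 1` and real `m > 1`,
`η(m,n) = (1−m)/(2(1−mⁿ)) + ((1−m)²/(m(1−mⁿ))) ∑_{j=1}^n m^{2j}/(1−m^j)`
satisfies `η(m,n) ≤ 6(m−1) + (6.5 + log n)/n`. -/
theorem eta_bound_supercritical (n : ℕ) (hn : 1 ≤ n) (m : ℝ) (hm : 1 < m) :
    (1 - m) / (2 * (1 - m ^ n))
        + (1 - m) ^ 2 / (m * (1 - m ^ n))
          * ∑ j ∈ Finset.Icc 1 n, m ^ (2 * j) / (1 - m ^ j)
      ≤ 6 * (m - 1) + (6.5 + Real.log n) / n := by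
  have hm0 : (0:ℝ) < m := by linarith
  have hm1 : (0:ℝ) < m - 1 := by linarith
  have hnR : (0:ℝ) < n := by exact_mod_cast Nat.pos_of_ne_zero (by omega)
  have hP : 0 < m ^ n - 1 := pow_sub_one_pos hm hn
  have hPn : (n : ℝ) * (m - 1) ≤ m ^ n - 1 := bernoulli_aux hm n
  -- rewrite in positive orientation
  have e1 : (1 - m) / (2 * (1 - m ^ n)) = (m - 1) / (2 * (m ^ n - 1)) := by
    rw [div_eq_div_iff (by nlinarith) (by nlinarith)]; ring
  have e2 : (1 - m) ^ 2 / (m * (1 - m ^ n))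
          * ∑ j ∈ Finset.Icc 1 n, m ^ (2 * j) / (1 - m ^ j)
      = (m - 1) ^ 2 / (m * (m ^ n - 1))
          * ∑ j ∈ Finset.Icc 1 n, m ^ (2 * j) / (m ^ j - 1) := by
    have hc_neg : (1 - m) ^ 2 / (m * (1 - m ^ n))
        = -((m - 1) ^ 2 / (m * (m ^ n - 1))) := by
      rw [show (1 - m) ^ 2 = (m - 1) ^ 2 by ring,
        show m * (1 - m ^ n) = -(m * (m ^ n - 1)) by ring, div_neg]
    have hs_neg : ∑ j ∈ Finset.Icc 1 n, m ^ (2 * j) / (1 - m ^ j)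
        = -∑ j ∈ Finset.Icc 1 n, m ^ (2 * j) / (m ^ j - 1) := by
      rw [← Finset.sum_neg_distrib]
      refine Finset.sum_congr rfl fun j _ => ?_
      rw [show (1 - m ^ j) = -(m ^ j - 1) by ring, div_neg]
    rw [hc_neg, hs_neg, neg_mul_neg]
  rw [e1, e2]
  set H : ℝ := ∑ j ∈ Finset.Icc 1 n, (j : ℝ)⁻¹ with hH
  have hHlog : H ≤ 1 + Real.log n := by
    have h1 : H = ((harmonic n : ℚ) : ℝ) := by
      simp only [hH, harmonic_eq_sum_Icc, Rat.cast_sum, Rat.cast_inv, Rat.cast_natCast]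
    rw [h1]; exact harmonic_le_one_add_log n
  have hH0 : 0 ≤ H := Finset.sum_nonneg fun j _ => by positivity
  -- bound the sum
  have hsum : ∑ j ∈ Finset.Icc 1 n, m ^ (2 * j) / (m ^ j - 1)
      ≤ m * (m ^ n - 1) / (m - 1) + n + H / (m - 1) := by
    have hgeom : ∑ j ∈ Finset.Icc 1 n, m ^ j = m * (m ^ n - 1) / (m - 1) := by
      have hrange : ∑ j ∈ Finset.range n, m ^ j = (m ^ n - 1) / (m - 1) := by
        rw [geom_sum_eq (by linarith : m ≠ 1)]
      rw [show Finset.Icc 1 n = Finset.Ico 1 (n+1) by rfl, Finset.sum_Ico_eq_sum_range]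
      simp only [Nat.add_sub_cancel, pow_add, pow_one]
      rw [← Finset.mul_sum, hrange, mul_div_assoc]
    calc ∑ j ∈ Finset.Icc 1 n, m ^ (2 * j) / (m ^ j - 1)
        ≤ ∑ j ∈ Finset.Icc 1 n, (m ^ j + 1 + (j : ℝ)⁻¹ / (m - 1)) := by
          refine Finset.sum_le_sum fun j hj => ?_
          have hj1 : 1 ≤ j := (Finset.mem_Icc.mp hj).1
          have hjp : 0 < m ^ j - 1 := pow_sub_one_pos hm hj1
          have hjR : (0:ℝ) < j := by exact_mod_cast Nat.pos_of_ne_zero (by omega)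
          have hexact : m ^ (2 * j) / (m ^ j - 1) = m ^ j + 1 + 1 / (m ^ j - 1) := by
            rw [two_mul, pow_add]
            field_simp
            ring
          rw [hexact]
          have hb : (j : ℝ) * (m - 1) ≤ m ^ j - 1 := bernoulli_aux hm j
          have hinv : (0:ℝ) < (j:ℝ)⁻¹ := by positivity
          have : 1 / (m ^ j - 1) ≤ (j : ℝ)⁻¹ / (m - 1) := by
            rw [div_le_div_iff₀ hjp (by positivity)]
            nlinarith [mul_le_mul_of_nonneg_left hb (le_of_lt hinv),
              mul_inv_cancel₀ (ne_of_gt hjR)]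
          linarith
      _ = m * (m ^ n - 1) / (m - 1) + n + H / (m - 1) := by
          rw [Finset.sum_add_distrib, Finset.sum_add_distrib, hgeom, Finset.sum_const,
            Nat.card_Icc, ← Finset.sum_div]
          simp [hH]
  -- now combine
  have hc : 0 < (m - 1) ^ 2 / (m * (m ^ n - 1)) := by positivity
  have key : (m - 1) ^ 2 / (m * (m ^ n - 1))
          * ∑ j ∈ Finset.Icc 1 n, m ^ (2 * j) / (m ^ j - 1)
      ≤ (m - 1) + (m - 1) + (1 + Real.log n) / n := by
    have h1 : (m - 1) ^ 2 / (m * (m ^ n - 1)) * (m * (m ^ n - 1) / (m - 1)) = m - 1 := by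
      field_simp
    have h2 : (m - 1) ^ 2 / (m * (m ^ n - 1)) * n ≤ m - 1 := by
      rw [div_mul_eq_mul_div, div_le_iff₀ (by positivity)]
      nlinarith
    have h3 : (m - 1) ^ 2 / (m * (m ^ n - 1)) * (H / (m - 1)) ≤ (1 + Real.log n) / n := by
      have e : (m - 1) ^ 2 / (m * (m ^ n - 1)) * (H / (m - 1))
          = H * ((m - 1) / (m * (m ^ n - 1))) := by
        field_simp
      rw [e]
      have hfrac : (m - 1) / (m * (m ^ n - 1)) ≤ 1 / (n : ℝ) := by
        rw [div_le_div_iff₀ (by positivity) hnR]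
        nlinarith
      calc H * ((m - 1) / (m * (m ^ n - 1))) ≤ (1 + Real.log n) * (1 / n) := by
            apply mul_le_mul hHlog hfrac (by positivity)
            have : (0:ℝ) ≤ Real.log n := Real.log_nonneg (by exact_mod_cast hn)
            linarith
        _ = (1 + Real.log n) / n := by ring
    calc (m - 1) ^ 2 / (m * (m ^ n - 1))
          * ∑ j ∈ Finset.Icc 1 n, m ^ (2 * j) / (m ^ j - 1)
        ≤ (m - 1) ^ 2 / (m * (m ^ n - 1))
          * (m * (m ^ n - 1) / (m - 1) + n + H / (m - 1)) := by
          exact mul_le_mul_of_nonneg_left hsum (le_of_lt hc)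
      _ = (m - 1) ^ 2 / (m * (m ^ n - 1)) * (m * (m ^ n - 1) / (m - 1))
          + (m - 1) ^ 2 / (m * (m ^ n - 1)) * n
          + (m - 1) ^ 2 / (m * (m ^ n - 1)) * (H / (m - 1)) := by ring
      _ ≤ (m - 1) + (m - 1) + (1 + Real.log n) / n := by
          rw [h1]; linarith
  have hfirst : (m - 1) / (2 * (m ^ n - 1)) ≤ 1 / (2 * n) := by
    rw [div_le_div_iff₀ (by positivity) (by positivity)]
    nlinarith
  have hlogn : (0:ℝ) ≤ Real.log n := Real.log_nonneg (by exact_mod_cast hn)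
  have hfin : 1 / (2 * (n:ℝ)) + (1 + Real.log n) / n ≤ (6.5 + Real.log n) / n := by
    rw [div_add_div _ _ (by positivity) (ne_of_gt hnR), div_le_div_iff₀ (by positivity) hnR]
    ring_nf
    nlinarith
  linarith
end

section
/- For any integer n ≥ 2 and any real m with 1/2 ≤ m < 1, the quantity η(m,n) = (1−m)/(2(1−m^n)) + ((1−m)^2/(m(1−m^n))) · Σ_{j=1}^n m^{2j}/(1−m^j) satisfies η(m,n) ≤ (4.5 − log(1−m))(1−m) + (4.5 + log n)/n. -/
open Finset Real

private lemma aux_geom (m : ℝ) (hm0 : 0 < m) (hm1 : m < 1) (j : ℕ) :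
    (j : ℝ) * (1 - m) * m ^ j ≤ m * (1 - m ^ j) := by
  have hgeom : (1 - m) * ∑ i ∈ range j, m ^ i = 1 - m ^ j := by
    have := geom_sum_mul m j
    linarith [this]
  have h1 : (j : ℝ) * m ^ j ≤ m * ∑ i ∈ range j, m ^ i := by
    rw [Finset.mul_sum]
    calc (j : ℝ) * m ^ j = ∑ _i ∈ range j, m ^ j := by
          rw [Finset.sum_const, card_range, nsmul_eq_mul]
      _ ≤ ∑ i ∈ range j, m * m ^ i := by
          refine Finset.sum_le_sum fun i hi => ?_
          rw [← pow_succ']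
          exact pow_le_pow_of_le_one hm0.le hm1.le (by simpa using Finset.mem_range.mp hi)
  calc (j : ℝ) * (1 - m) * m ^ j = (1 - m) * ((j : ℝ) * m ^ j) := by ring
    _ ≤ (1 - m) * (m * ∑ i ∈ range j, m ^ i) :=
        mul_le_mul_of_nonneg_left h1 (by linarith)
    _ = m * ((1 - m) * ∑ i ∈ range j, m ^ i) := by ring
    _ = m * (1 - m ^ j) := by rw [hgeom]

/-- **Bound (6) on η(m,n) for 1/2 ≤ m < 1, Peköz–Röllin.**
For any integer `n ≥ 2` and real `m` with `1/2 ≤ m < 1`,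
`η(m,n) = (1−m)/(2(1−mⁿ)) + ((1−m)²/(m(1−mⁿ))) ∑_{j=1}^n m^{2j}/(1−m^j)`
satisfies `η(m,n) ≤ (4.5 − log(1−m))(1−m) + (4.5 + log n)/n`. -/
theorem eta_bound_subcritical (n : ℕ) (hn : 2 ≤ n) (m : ℝ)
    (hm₁ : 1 / 2 ≤ m) (hm₂ : m < 1) :
    (1 - m) / (2 * (1 - m ^ n))
        + (1 - m) ^ 2 / (m * (1 - m ^ n))
          * ∑ j ∈ Finset.Icc 1 n, m ^ (2 * j) / (1 - m ^ j)
      ≤ (4.5 - Real.log (1 - m)) * (1 - m) + (4.5 + Real.log n) / n := by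
  have hm0 : (0:ℝ) < m := by linarith
  have hε : (0:ℝ) < 1 - m := by linarith
  have hmn1 : m ^ n < 1 := pow_lt_one₀ hm0.le hm₂ (by omega)
  have hP : (0:ℝ) < 1 - m ^ n := by linarith
  have hn0 : (0:ℝ) < n := by positivity
  set S : ℝ := ∑ j ∈ Finset.Icc 1 n, m ^ j / j with hS
  have hS0 : 0 ≤ S := Finset.sum_nonneg fun j hj => by positivity
  -- termwise bound on the sum
  have hsum : ∑ j ∈ Finset.Icc 1 n, m ^ (2 * j) / (1 - m ^ j)
      ≤ (m / (1 - m)) * S := by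
    rw [hS, Finset.mul_sum]
    refine Finset.sum_le_sum fun j hj => ?_
    have hj1 : 1 ≤ j := (Finset.mem_Icc.mp hj).1
    have hj0 : (0:ℝ) < j := by exact_mod_cast hj1
    have hmj1 : m ^ j < 1 := pow_lt_one₀ hm0.le hm₂ (by omega)
    have hPj : (0:ℝ) < 1 - m ^ j := by linarith
    have key := aux_geom m hm0 hm₂ j
    have e1 : m ^ (2 * j) = m ^ j * m ^ j := by rw [two_mul, pow_add]
    rw [div_le_iff₀ hPj] at *
    have hmp : (0:ℝ) ≤ m ^ j := by positivity
    calc m ^ (2 * j) = m ^ j * m ^ j := e1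
      _ ≤ m ^ j * (m * (1 - m ^ j) / ((j : ℝ) * (1 - m))) := by
          refine mul_le_mul_of_nonneg_left ?_ hmp
          rw [le_div_iff₀ (by positivity)]
          nlinarith [key]
      _ = m / (1 - m) * (m ^ j / j) * (1 - m ^ j) := by
          field_simp
  -- coefficient simplification
  have hcoef : (1 - m) ^ 2 / (m * (1 - m ^ n)) * ((m / (1 - m)) * S)
      = (1 - m) / (1 - m ^ n) * S := by
    field_simp
  have hcoef_pos : 0 ≤ (1 - m) ^ 2 / (m * (1 - m ^ n)) := by positivity
  have step1 : (1 - m) / (2 * (1 - m ^ n))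
        + (1 - m) ^ 2 / (m * (1 - m ^ n))
          * ∑ j ∈ Finset.Icc 1 n, m ^ (2 * j) / (1 - m ^ j)
      ≤ (1 - m) / (1 - m ^ n) * (1 / 2 + S) := by
    have := mul_le_mul_of_nonneg_left hsum hcoef_pos
    rw [hcoef] at this
    have he : (1 - m) / (2 * (1 - m ^ n)) = (1 - m) / (1 - m ^ n) * (1 / 2) := by
      rw [div_mul_div_comm, mul_one, mul_comm]
    rw [mul_add, ← he]
    linarith
  -- (1-m)/(1-m^n) ≤ (1-m) + 1/n
  have hratio : (1 - m) / (1 - m ^ n) ≤ (1 - m) + 1 / n := by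
    have key : (n : ℝ) * (1 - m) * m ^ n ≤ 1 - m ^ n := by
      have := aux_geom m hm0 hm₂ n
      nlinarith [pow_nonneg hm0.le n]
    rw [div_le_iff₀ hP]
    have h3 : (1 - m) * m ^ n ≤ (1 - m ^ n) / n := by
      rw [le_div_iff₀ hn0]; nlinarith [key]
    have : (1 / (n:ℝ)) * (1 - m ^ n) = (1 - m ^ n) / n := by ring
    nlinarith [h3]
  have step2 : (1 - m) / (1 - m ^ n) * (1 / 2 + S)
      ≤ ((1 - m) + 1 / n) * (1 / 2 + S) :=
    mul_le_mul_of_nonneg_right hratio (by linarith)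
  -- S ≤ -log (1-m)
  have hSlog : S ≤ -Real.log (1 - m) := by
    have habs : |m| < 1 := abs_lt.mpr ⟨by linarith, hm₂⟩
    have hsum2 := hasSum_pow_div_log_of_abs_lt_one habs
    have hrange : S = ∑ i ∈ range n, m ^ (i + 1) / (i + 1) := by
      rw [hS, ← Finset.Ico_add_one_right_eq_Icc, Finset.sum_Ico_eq_sum_range]
      refine Finset.sum_congr rfl fun i hi => ?_
      push_cast
      rw [add_comm 1 i, add_comm (1:ℝ) i]
    rw [hrange]
    exact sum_le_hasSum (range n) (fun i _ => by positivity) hsum2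
  -- S ≤ 1 + log n
  have hSharm : S ≤ 1 + Real.log n := by
    refine le_trans ?_ (harmonic_le_one_add_log n)
    rw [harmonic_eq_sum_Icc]
    push_cast
    rw [hS]
    refine Finset.sum_le_sum fun j hj => ?_
    have hj1 : 1 ≤ j := (Finset.mem_Icc.mp hj).1
    have hj0 : (0:ℝ) < j := by exact_mod_cast hj1
    rw [div_le_iff₀ hj0, inv_mul_cancel₀ (ne_of_gt hj0)]
    exact pow_le_one₀ hm0.le hm₂.le
  -- final assembly
  have hlogε : Real.log (1 - m) ≤ 0 :=
    Real.log_nonpos (by linarith) (by linarith)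
  have final : ((1 - m) + 1 / n) * (1 / 2 + S)
      ≤ (4.5 - Real.log (1 - m)) * (1 - m) + (4.5 + Real.log n) / n := by
    have h1 : (1 - m) * (1 / 2 + S) ≤ (4.5 - Real.log (1 - m)) * (1 - m) := by
      have hb : (1 / 2 + S) ≤ 4.5 - Real.log (1 - m) := by linarith
      calc (1 - m) * (1 / 2 + S) ≤ (1 - m) * (4.5 - Real.log (1 - m)) :=
            mul_le_mul_of_nonneg_left hb hε.le
        _ = (4.5 - Real.log (1 - m)) * (1 - m) := mul_comm _ _
    have h2 : (1 / (n:ℝ)) * (1 / 2 + S) ≤ (4.5 + Real.log n) / n := by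
      have hb : (1 / 2 + S) ≤ 4.5 + Real.log n := by linarith
      have hinv : (0:ℝ) ≤ 1 / n := by positivity
      calc (1 / (n:ℝ)) * (1 / 2 + S) ≤ (1 / (n:ℝ)) * (4.5 + Real.log n) :=
            mul_le_mul_of_nonneg_left hb hinv
        _ = (4.5 + Real.log n) / n := by rw [one_div, inv_mul_eq_div]
    calc ((1 - m) + 1 / n) * (1 / 2 + S)
        = (1 - m) * (1 / 2 + S) + (1 / n) * (1 / 2 + S) := by ring
      _ ≤ _ := add_le_add h1 h2
  linarith [step1, step2, final]
end

section
/- Let a, b and c be real numbers each greater than 1 such that 1/a ≤ 1/b + 1/c ≤ 1. Then log(a)/a ≤ (1 + log b)/b + (1 + log c)/c. -/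
/-- **Lemma 3.3, Peköz–Röllin.**
If `a, b, c > 1` and `1/a ≤ 1/b + 1/c ≤ 1`, then
`log(a)/a ≤ (1 + log b)/b + (1 + log c)/c`. -/
theorem log_div_le_of_inv_le (a b c : ℝ) (ha : 1 < a) (hb : 1 < b) (hc : 1 < c)
    (h₁ : 1 / a ≤ 1 / b + 1 / c) (h₂ : 1 / b + 1 / c ≤ 1) :
    Real.log a / a ≤ (1 + Real.log b) / b + (1 + Real.log c) / c := by
  have ha0 : (0:ℝ) < a := lt_trans one_pos ha
  have hb0 : (0:ℝ) < b := lt_trans one_pos hb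
  have hc0 : (0:ℝ) < c := lt_trans one_pos hc
  set x : ℝ := 1/a with hxdef
  set u : ℝ := 1/b with hudef
  set v : ℝ := 1/c with hvdef
  have hx0 : 0 < x := by positivity
  have hu0 : 0 < u := by positivity
  have hv0 : 0 < v := by positivity
  set s : ℝ := u + v with hsdef
  have hs0 : 0 < s := by positivity
  have hxs : x ≤ s := h₁
  have hs1 : s ≤ 1 := h₂
  have hlogx : Real.log x = - Real.log a := by rw [hxdef, one_div, Real.log_inv]
  have hlogu : Real.log u = - Real.log b := by rw [hudef, one_div, Real.log_inv]
  have hlogv : Real.log v = - Real.log c := by rw [hvdef, one_div, Real.log_inv]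
  have e1 : Real.log a / a = -(x * Real.log x) := by
    rw [hlogx, hxdef]; field_simp
  have e2 : (1 + Real.log b) / b + (1 + Real.log c) / c
      = s - u * Real.log u - v * Real.log v := by
    rw [hlogu, hlogv, hsdef, hudef, hvdef]; field_simp; ring
  rw [e1, e2]
  have hlogs : Real.log s ≤ 0 := Real.log_nonpos hs0.le hs1
  -- Step B : x - x log x ≤ s - s log s
  have hdiv : Real.log (s/x) ≤ s/x - 1 := Real.log_le_sub_one_of_pos (by positivity)
  have hdiv' : Real.log (s/x) = Real.log s - Real.log x := Real.log_div hs0.ne' hx0.ne'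
  have hmul : x * (Real.log s - Real.log x) ≤ s - x := by
    have := mul_le_mul_of_nonneg_left hdiv hx0.le
    rw [hdiv'] at this
    have h3 : x * (s/x - 1) = s - x := by field_simp
    linarith [this, h3.le]
  have hsx : (s - x) * Real.log s ≤ 0 :=
    mul_nonpos_of_nonneg_of_nonpos (sub_nonneg.2 hxs) hlogs
  -- Step C
  have huv1 : u * Real.log u ≤ u * Real.log s :=
    mul_le_mul_of_nonneg_left (Real.log_le_log hu0 (by rw [hsdef]; linarith)) hu0.le
  have huv2 : v * Real.log v ≤ v * Real.log s :=
    mul_le_mul_of_nonneg_left (Real.log_le_log hv0 (by rw [hsdef]; linarith)) hv0.le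
  nlinarith [hmul, hsx, huv1, huv2, hx0.le]
end

section
/- For any real m > 1 and integer n ≥ 1, Σ_{j=1}^n m^{2j}/(m^j − 1) ≤ m^2/(m−1) + 2 m^{2n}/(m^n − 1) + (m^n − m + log((m^n − 1)/(m − 1)))/log(m). -/
open Real Finset

private lemma sumA (m : ℝ) (hm : 1 < m) : ∀ n : ℕ, 1 ≤ n →
    ∑ j ∈ Finset.Icc 1 n, m ^ j ≤ (m ^ n - m) / Real.log m + m ^ n := by
  have hlm : 0 < Real.log m := Real.log_pos hm
  have hle : Real.log m ≤ m - 1 := by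
    have := Real.log_le_sub_one_of_pos (x := m) (by linarith)
    linarith
  intro n hn
  induction n, hn using Nat.le_induction with
  | base => simp
  | succ n hn ih =>
    rw [Finset.sum_Icc_succ_top (by omega)]
    have hpow : (1:ℝ) ≤ m ^ n := one_le_pow₀ hm.le
    have key : m ^ n ≤ (m ^ (n+1) - m ^ n) / Real.log m := by
      rw [le_div_iff₀ hlm]
      have : m ^ (n+1) - m ^ n = m ^ n * (m - 1) := by ring
      rw [this]
      have : m ^ n * Real.log m ≤ m ^ n * (m - 1) := by
        apply mul_le_mul_of_nonneg_left hle (by positivity)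
      linarith
    have h2 : m ^ n ≤ m ^ (n+1) := by
      have : m ^ n * 1 ≤ m ^ n * m := by nlinarith
      simpa [pow_succ] using this
    have : (m ^ (n+1) - m) / Real.log m = (m ^ n - m) / Real.log m + (m ^ (n+1) - m ^ n) / Real.log m := by
      field_simp
      ring
    linarith

private lemma sumB (m : ℝ) (hm : 1 < m) : ∀ n : ℕ, 1 ≤ n →
    ∑ j ∈ Finset.Icc 1 n, (1 + 1 / (m ^ j - 1))
      ≤ 1 + 1 / (m - 1) + (Real.log (m ^ n - 1) - Real.log (m - 1)) / Real.log m := by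
  have hlm : 0 < Real.log m := Real.log_pos hm
  have hm1 : (0:ℝ) < m - 1 := by linarith
  have hle : Real.log m ≤ m - 1 := by
    have := Real.log_le_sub_one_of_pos (x := m) (by linarith)
    linarith
  intro n hn
  induction n, hn using Nat.le_induction with
  | base => simp
  | succ n hn ih =>
    rw [Finset.sum_Icc_succ_top (by omega)]
    set a := m ^ n with ha
    have ha1 : 1 < a := one_lt_pow₀ hm (by omega)
    have hma : 1 < m * a := by nlinarith
    have hma1 : (0:ℝ) < m * a - 1 := by linarith
    have ham : (0:ℝ) < m * a - m := by nlinarith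
    -- key: log m * (1 + 1/(m*a-1)) ≤ log (m*a-1) - log (a-1)
    have hq : Real.log ((m * a - m) / (m * a - 1)) ≤ (m * a - m) / (m * a - 1) - 1 :=
      Real.log_le_sub_one_of_pos (by positivity)
    have hqeq : Real.log ((m * a - m) / (m * a - 1))
        = Real.log (m * a - m) - Real.log (m * a - 1) :=
      Real.log_div (by linarith) (by linarith)
    have hprod : Real.log (m * a - m) = Real.log m + Real.log (a - 1) := by
      have : m * a - m = m * (a - 1) := by ring
      rw [this, Real.log_mul (by linarith) (by linarith)]
    have hfrac : (m * a - m) / (m * a - 1) - 1 = -((m - 1) / (m * a - 1)) := by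
      field_simp
      ring
    have h1 : Real.log m + Real.log (a - 1) + (m - 1) / (m * a - 1)
        ≤ Real.log (m * a - 1) := by
      rw [hqeq, hprod, hfrac] at hq
      linarith
    have h2 : Real.log m / (m * a - 1) ≤ (m - 1) / (m * a - 1) := by
      gcongr
    have key : Real.log m * (1 + 1 / (m * a - 1))
        ≤ Real.log (m * a - 1) - Real.log (a - 1) := by
      have : Real.log m * (1 + 1 / (m * a - 1)) = Real.log m + Real.log m / (m * a - 1) := by
        ring
      rw [this]
      linarith
    have hpow : m ^ (n + 1) = m * a := by rw [ha, pow_succ]; ring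
    have step : 1 + 1 / (m ^ (n+1) - 1)
        ≤ (Real.log (m ^ (n+1) - 1) - Real.log (a - 1)) / Real.log m := by
      rw [hpow, le_div_iff₀ hlm]
      calc (1 + 1 / (m * a - 1)) * Real.log m
          = Real.log m * (1 + 1 / (m * a - 1)) := by ring
        _ ≤ Real.log (m * a - 1) - Real.log (a - 1) := key
    have hsplit : (Real.log (m ^ (n+1) - 1) - Real.log (m - 1)) / Real.log m
        = (Real.log (a - 1) - Real.log (m - 1)) / Real.log m
          + (Real.log (m ^ (n+1) - 1) - Real.log (a - 1)) / Real.log m := by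
      field_simp
      ring
    linarith

/-- **Integral comparison bound, supercritical case, Peköz–Röllin.**
For any real `m > 1` and integer `n ≥ 1`,
`∑_{j=1}^n m^{2j}/(m^j − 1) ≤ m²/(m−1) + 2 m^{2n}/(mⁿ−1) + (mⁿ − m + log((mⁿ−1)/(m−1)))/log m`. -/
theorem sum_bound_supercritical (m : ℝ) (hm : 1 < m) (n : ℕ) (hn : 1 ≤ n) :
    ∑ j ∈ Finset.Icc 1 n, m ^ (2 * j) / (m ^ j - 1)
      ≤ m ^ 2 / (m - 1) + 2 * m ^ (2 * n) / (m ^ n - 1)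
        + (m ^ n - m + Real.log ((m ^ n - 1) / (m - 1))) / Real.log m := by
  have hlm : 0 < Real.log m := Real.log_pos hm
  have hm1 : (0:ℝ) < m - 1 := by linarith
  have hn1 : (1:ℝ) < m ^ n := one_lt_pow₀ hm (by omega)
  -- rewrite each term
  have hterm : ∀ j ∈ Finset.Icc 1 n, m ^ (2 * j) / (m ^ j - 1)
      = m ^ j + (1 + 1 / (m ^ j - 1)) := by
    intro j hj
    have hj1 : 1 ≤ j := (Finset.mem_Icc.mp hj).1
    have hjp : 1 < m ^ j := one_lt_pow₀ hm (by omega)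
    have hne : m ^ j - 1 ≠ 0 := by linarith
    have h2 : m ^ (2 * j) = (m ^ j) ^ 2 := by rw [pow_mul, sq]; ring_nf
    rw [h2]
    field_simp
    ring
  rw [Finset.sum_congr rfl hterm, Finset.sum_add_distrib]
  have hA := sumA m hm n hn
  have hB := sumB m hm n hn
  have hlogdiv : Real.log ((m ^ n - 1) / (m - 1))
      = Real.log (m ^ n - 1) - Real.log (m - 1) :=
    Real.log_div (by linarith) (by linarith)
  have hRsplit : (m ^ n - m + Real.log ((m ^ n - 1) / (m - 1))) / Real.log m
      = (m ^ n - m) / Real.log m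
        + (Real.log (m ^ n - 1) - Real.log (m - 1)) / Real.log m := by
    rw [hlogdiv]; ring
  have hmid : 2 * m ^ (2 * n) / (m ^ n - 1) = 2 * (m ^ n + 1 + 1 / (m ^ n - 1)) := by
    have h2 : m ^ (2 * n) = (m ^ n) ^ 2 := by rw [pow_mul, sq]; ring_nf
    have hne : m ^ n - 1 ≠ 0 := by linarith
    rw [h2]
    field_simp
    ring
  rw [hRsplit, hmid]
  -- remaining: m^n + (1 + 1/(m-1)) ≤ m^2/(m-1) + 2*(m^n+1+1/(m^n-1))
  have e1 : 1 / (m - 1) ≤ m ^ 2 / (m - 1) := by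
    gcongr
    nlinarith
  have e2 : (0:ℝ) ≤ 1 / (m ^ n - 1) := div_nonneg zero_le_one (by linarith)
  have e3 : (0:ℝ) < m ^ n := by positivity
  linarith
end

section
/- Let X_1, X_2, ..., X_n be (possibly dependent) non-negative random variables with 0 < E Σ_{i=1}^n X_i < ∞, let λ = 1/E Σ_{i=1}^n X_i, and set W = λ Σ_{i=1}^n X_i. For each i and x, let W_i(x) be a random variable, independent of all else, with the law of λ Σ_{m=1}^{i−1} X_m conditioned on X_i = x. Let I be a random index, independent of all else, with P(I = i) = λ E X_i; let U be uniform on (0,1) independent of all else; and let X_i^s, independent of all else, have the size-biased distribution with respect to X_i. Then W^e = W_I(X_I^s) + λ U X_I^s has the equilibrium distribution with respect to W. -/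
open MeasureTheory ProbabilityTheory

lemma vol_Ioo_inter_Iic (t : ℝ) :
    volume (Set.Ioo (0:ℝ) 1 ∩ Set.Iic t) = ENNReal.ofReal (min t 1) := by
  rcases le_or_gt t 0 with h | h
  · have he : Set.Ioo (0:ℝ) 1 ∩ Set.Iic t = ∅ := by
      apply Set.eq_empty_iff_forall_notMem.2
      rintro u ⟨⟨h1, _⟩, h2⟩
      rw [Set.mem_Iic] at h2; linarith
    rw [he]
    simp [min_eq_left (h.trans zero_le_one), ENNReal.ofReal_of_nonpos h]
  · rcases le_or_gt 1 t with h1 | h1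
    · have he : Set.Ioo (0:ℝ) 1 ∩ Set.Iic t = Set.Ioo 0 1 :=
        Set.inter_eq_left.2 (fun u hu => (le_of_lt hu.2).trans h1)
      rw [he, Real.volume_Ioo, min_eq_right h1]
      norm_num
    · have he : Set.Ioo (0:ℝ) 1 ∩ Set.Iic t = Set.Ioc 0 t := by
        ext u
        simp only [Set.mem_inter_iff, Set.mem_Ioo, Set.mem_Iic, Set.mem_Ioc]
        constructor
        · rintro ⟨⟨h2, h3⟩, h4⟩; exact ⟨h2, h4⟩
        · rintro ⟨h2, h4⟩; exact ⟨⟨h2, lt_of_le_of_lt h4 h1⟩, h4⟩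
      rw [he, Real.volume_Ioc, min_eq_left h1.le]
      norm_num

lemma key_mul_vol (a c x : ℝ) (hc : 0 ≤ c) :
    ENNReal.ofReal c * volume {u : ℝ | u ∈ Set.Ioo (0:ℝ) 1 ∧ a + u * c ≤ x}
      = ENNReal.ofReal (min x (a + c) - min x a) := by
  rcases eq_or_lt_of_le hc with hc0 | hc0
  · simp [← hc0]
  · have hset : {u : ℝ | u ∈ Set.Ioo (0:ℝ) 1 ∧ a + u * c ≤ x}
        = Set.Ioo 0 1 ∩ Set.Iic ((x - a)/c) := by
      ext u
      simp only [Set.mem_setOf_eq, Set.mem_inter_iff, Set.mem_Iic]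
      rw [le_div_iff₀ hc0]
      constructor
      · rintro ⟨h1, h2⟩; exact ⟨h1, by linarith⟩
      · rintro ⟨h1, h2⟩; exact ⟨h1, by linarith⟩
    have hct : c * ((x - a)/c) = x - a := mul_div_cancel₀ _ (ne_of_gt hc0)
    rw [hset, vol_Ioo_inter_Iic, ← ENNReal.ofReal_mul hc,
      mul_min_of_nonneg _ _ hc, hct, mul_one]
    rcases le_total x a with h | h
    · rw [min_eq_left (by linarith : x - a ≤ c), min_eq_left h,
        min_eq_left (h.trans (by linarith)), sub_self,
        ENNReal.ofReal_of_nonpos (by linarith), ENNReal.ofReal_zero]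
    · rw [min_eq_right h]
      congr 1
      rcases le_total x (a + c) with h2 | h2
      · rw [min_eq_left h2, min_eq_left (by linarith)]
      · rw [min_eq_right h2, min_eq_right (by linarith)]
        ring

lemma vol_Iio_inter_Ioc (w x : ℝ) (hx : 0 ≤ x) (hw : 0 ≤ w) :
    volume (Set.Iio w ∩ Set.Ioc 0 x) = ENNReal.ofReal (min x w) := by
  rcases le_or_gt w x with h | h
  · have he : Set.Iio w ∩ Set.Ioc 0 x = Set.Ioo 0 w := by
      ext y
      simp only [Set.mem_inter_iff, Set.mem_Iio, Set.mem_Ioc, Set.mem_Ioo]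
      constructor
      · rintro ⟨h1, h2, h3⟩; exact ⟨h2, h1⟩
      · rintro ⟨h1, h2⟩; exact ⟨h2, h1, by linarith⟩
    rw [he, Real.volume_Ioo, min_eq_right h]
    norm_num
  · have he : Set.Iio w ∩ Set.Ioc 0 x = Set.Ioc 0 x := by
      apply Set.inter_eq_right.2
      rintro y ⟨h1, h2⟩
      exact Set.mem_Iio.2 (lt_of_le_of_lt h2 h)
    rw [he, Real.volume_Ioc, min_eq_left h.le]
    norm_num

/-- **Theorem 4.1, Peköz–Röllin (equilibrium coupling for dependent sums).**
Let `X 1, …, X n ≥ 0` (possibly dependent) with `0 < E ∑ X i < ∞`, let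
`λ = 1/E ∑ X i` and `W = λ ∑_{i=1}^n X i`.  On an auxiliary space let `I` be a random
index with `P(I = i) = λ E X i`, and let `(Wi, Xs)` be such that, on the event `{I = i}`,
the pair `(Wi, Xs)` is distributed as `(λ ∑_{m=1}^{i−1} X m, X i)` under the `X i`-size-biased
measure (equivalently: `Xs = X_I^s` is size-biased from `X_I` and `Wi = W_I(X_I^s)` has the
conditional law of `λ ∑_{m<I} X m` given `X_I = Xs`).  Let `U` be uniform on `(0,1)`,
independent of `(I, Wi, Xs)`.  Then `Wᵉ = Wi + λ U Xs` has the equilibrium distribution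
w.r.t. `W`, i.e. (since `E W = 1`) `P(Wᵉ ≤ x) = ∫_0^x P(W > y) dy` for all `x ≥ 0`. -/
theorem equilibrium_coupling_dependent_sums
    {Ω Ω' : Type*} [MeasurableSpace Ω] [MeasurableSpace Ω']
    (μ : Measure Ω) (μ' : Measure Ω')
    [IsProbabilityMeasure μ] [IsProbabilityMeasure μ']
    (n : ℕ) (X : ℕ → Ω → ℝ) (hXmeas : ∀ i, Measurable (X i))
    (hXnn : ∀ i ω, 0 ≤ X i ω) (hXint : ∀ i, Integrable (X i) μ)
    (hpos : 0 < ∫ ω, ∑ i ∈ Finset.Icc 1 n, X i ω ∂μ)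
    (lam : ℝ) (hlam : lam = (∫ ω, ∑ i ∈ Finset.Icc 1 n, X i ω ∂μ)⁻¹)
    (I : Ω' → ℕ) (Wi Xs U : Ω' → ℝ)
    (hImeas : Measurable I) (hWimeas : Measurable Wi)
    (hXsmeas : Measurable Xs) (hUmeas : Measurable U)
    (hIrange : ∀ ω', I ω' ∈ Finset.Icc 1 n)
    (hI : ∀ i ∈ Finset.Icc 1 n,
      (μ' {ω' | I ω' = i}).toReal = lam * ∫ ω, X i ω ∂μ)
    (hjoint : ∀ i ∈ Finset.Icc 1 n,
      Measure.map (fun ω' => (Wi ω', Xs ω')) (μ'.restrict {ω' | I ω' = i})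
        = Measure.map (fun ω => (lam * ∑ m ∈ Finset.Ico 1 i, X m ω, X i ω))
            (μ.withDensity fun ω => ENNReal.ofReal (lam * X i ω)))
    (hU : Measure.map U μ' = volume.restrict (Set.Ioo (0:ℝ) 1))
    (hUindep : IndepFun U (fun ω' => (I ω', Wi ω', Xs ω')) μ') :
    ∀ x : ℝ, 0 ≤ x →
      (μ' {ω' | Wi ω' + lam * U ω' * Xs ω' ≤ x}).toReal
        = ∫ y in (0:ℝ)..x,
            (μ {ω | y < lam * ∑ i ∈ Finset.Icc 1 n, X i ω}).toReal := by
  intro x hx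
  have hlamnn : 0 ≤ lam := by rw [hlam]; exact inv_nonneg.2 hpos.le
  -- Step A: decompose over the value of I
  have hEmeas : MeasurableSet {ω' | Wi ω' + lam * U ω' * Xs ω' ≤ x} :=
    measurableSet_le (hWimeas.add ((hUmeas.const_mul lam).mul hXsmeas)) measurable_const
  have hdecomp : μ' {ω' | Wi ω' + lam * U ω' * Xs ω' ≤ x}
      = ∑ i ∈ Finset.Icc 1 n,
          μ' ({ω' | Wi ω' + lam * U ω' * Xs ω' ≤ x} ∩ {ω' | I ω' = i}) := by
    have hcover : {ω' | Wi ω' + lam * U ω' * Xs ω' ≤ x}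
        = ⋃ i ∈ Finset.Icc 1 n,
            ({ω' | Wi ω' + lam * U ω' * Xs ω' ≤ x} ∩ {ω' | I ω' = i}) := by
      ext ω'
      simp only [Set.mem_iUnion, Set.mem_inter_iff, Set.mem_setOf_eq, exists_prop]
      constructor
      · intro h; exact ⟨I ω', hIrange ω', h, rfl⟩
      · rintro ⟨i, _, h, _⟩; exact h
    conv_lhs => rw [hcover]
    refine measure_biUnion_finset ?_ ?_
    · intro i hi j hj hij
      refine Set.disjoint_left.2 ?_
      rintro ω' ⟨_, h1⟩ ⟨_, h2⟩
      exact hij (h1.symm.trans h2)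
    · intro i _
      exact hEmeas.inter (hImeas (measurableSet_singleton i))
  -- Step B: compute each piece
  have hstep : ∀ i ∈ Finset.Icc 1 n,
      μ' ({ω' | Wi ω' + lam * U ω' * Xs ω' ≤ x} ∩ {ω' | I ω' = i})
        = ∫⁻ ω, ENNReal.ofReal
            (min x (lam * ∑ m ∈ Finset.Ico 1 (i+1), X m ω)
              - min x (lam * ∑ m ∈ Finset.Ico 1 i, X m ω)) ∂μ := by
    intro i hi
    have h1i : 1 ≤ i := (Finset.mem_Icc.1 hi).1
    have hTmeas : Measurable (fun ω' => (I ω', Wi ω', Xs ω')) :=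
      hImeas.prodMk (hWimeas.prodMk hXsmeas)
    have hmap := (indepFun_iff_map_prod_eq_prod_map_map
      hUmeas.aemeasurable hTmeas.aemeasurable).1 hUindep
    have hTm : MeasurableSet
        {p : ℝ × ℕ × ℝ × ℝ | p.2.1 = i ∧ p.2.2.1 + lam * p.1 * p.2.2.2 ≤ x} := by
      refine (measurable_snd.fst (measurableSet_singleton i)).inter ?_
      exact measurableSet_le (measurable_snd.snd.fst.add
        ((measurable_fst.const_mul lam).mul measurable_snd.snd.snd)) measurable_const
    have hpre : (fun ω' => (U ω', I ω', Wi ω', Xs ω')) ⁻¹'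
        {p : ℝ × ℕ × ℝ × ℝ | p.2.1 = i ∧ p.2.2.1 + lam * p.1 * p.2.2.2 ≤ x}
        = {ω' | Wi ω' + lam * U ω' * Xs ω' ≤ x} ∩ {ω' | I ω' = i} := by
      ext ω'
      simp only [Set.mem_preimage, Set.mem_setOf_eq, Set.mem_inter_iff]
      tauto
    rw [← hpre, ← Measure.map_apply (hUmeas.prodMk hTmeas) hTm, hmap,
      Measure.prod_apply hTm]
    have hAm : ∀ u : ℝ, MeasurableSet
        {ω | lam * ∑ m ∈ Finset.Ico 1 i, X m ω + lam * u * X i ω ≤ x} := fun u =>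
      measurableSet_le (((Finset.measurable_sum _ fun m _ => hXmeas m).const_mul lam).add
        ((hXmeas i).const_mul (lam * u))) measurable_const
    have hslice : ∀ u : ℝ,
        (Measure.map (fun ω' => (I ω', Wi ω', Xs ω')) μ')
          (Prod.mk u ⁻¹' {p : ℝ × ℕ × ℝ × ℝ | p.2.1 = i ∧ p.2.2.1 + lam * p.1 * p.2.2.2 ≤ x})
        = ∫⁻ ω in {ω | lam * ∑ m ∈ Finset.Ico 1 i, X m ω + lam * u * X i ω ≤ x},
            ENNReal.ofReal (lam * X i ω) ∂μ := by
      intro u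
      have hq : MeasurableSet {q : ℕ × ℝ × ℝ | q.1 = i ∧ q.2.1 + lam * u * q.2.2 ≤ x} := by
        refine (measurable_fst (measurableSet_singleton i)).inter ?_
        exact measurableSet_le (measurable_snd.fst.add
          (measurable_snd.snd.const_mul (lam * u))) measurable_const
      have hpre2 : Prod.mk u ⁻¹'
          {p : ℝ × ℕ × ℝ × ℝ | p.2.1 = i ∧ p.2.2.1 + lam * p.1 * p.2.2.2 ≤ x}
          = {q : ℕ × ℝ × ℝ | q.1 = i ∧ q.2.1 + lam * u * q.2.2 ≤ x} := rfl
      rw [hpre2, Measure.map_apply hTmeas hq]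
      have hWXm : Measurable fun ω' => (Wi ω', Xs ω') := hWimeas.prodMk hXsmeas
      have hqm : MeasurableSet {q : ℝ × ℝ | q.1 + lam * u * q.2 ≤ x} :=
        measurableSet_le (measurable_fst.add (measurable_snd.const_mul (lam * u)))
          measurable_const
      have hpre3 : (fun ω' => (I ω', Wi ω', Xs ω')) ⁻¹'
          {q : ℕ × ℝ × ℝ | q.1 = i ∧ q.2.1 + lam * u * q.2.2 ≤ x}
          = ((fun ω' => (Wi ω', Xs ω')) ⁻¹' {q : ℝ × ℝ | q.1 + lam * u * q.2 ≤ x})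
            ∩ {ω' | I ω' = i} := by
        ext ω'
        simp only [Set.mem_preimage, Set.mem_setOf_eq, Set.mem_inter_iff]
        tauto
      rw [hpre3, ← Measure.restrict_apply (hWXm hqm),
        ← Measure.map_apply hWXm hqm, hjoint i hi,
        Measure.map_apply (((Finset.measurable_sum _ fun m _ => hXmeas m).const_mul lam).prodMk
          (hXmeas i)) hqm,
        withDensity_apply _ ((((Finset.measurable_sum _ fun m _ => hXmeas m).const_mul lam).prodMk
          (hXmeas i)) hqm)]
      rfl
    simp only [hslice, hU]
    have hPm : MeasurableSet
        {p : ℝ × Ω | lam * ∑ m ∈ Finset.Ico 1 i, X m p.2 + lam * p.1 * X i p.2 ≤ x} :=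
      measurableSet_le
        ((((Finset.measurable_sum _ fun m _ => hXmeas m).comp measurable_snd).const_mul lam).add
          ((measurable_fst.const_mul lam).mul ((hXmeas i).comp measurable_snd)))
        measurable_const
    have hFm : Measurable fun p : ℝ × Ω =>
        ({p : ℝ × Ω | lam * ∑ m ∈ Finset.Ico 1 i, X m p.2 + lam * p.1 * X i p.2 ≤ x}).indicator
          (fun p => ENNReal.ofReal (lam * X i p.2)) p :=
      Measurable.indicator (((hXmeas i).comp measurable_snd).const_mul lam).ennreal_ofReal hPm
    have h2 : ∀ u : ℝ,
        ∫⁻ ω in {ω | lam * ∑ m ∈ Finset.Ico 1 i, X m ω + lam * u * X i ω ≤ x},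
          ENNReal.ofReal (lam * X i ω) ∂μ
        = ∫⁻ ω, ({p : ℝ × Ω | lam * ∑ m ∈ Finset.Ico 1 i, X m p.2 + lam * p.1 * X i p.2 ≤ x}).indicator
            (fun p => ENNReal.ofReal (lam * X i p.2)) (u, ω) ∂μ := by
      intro u
      rw [← lintegral_indicator (hAm u)]
      refine lintegral_congr fun ω => ?_
      simp only [Set.indicator_apply, Set.mem_setOf_eq]
    simp only [h2]
    rw [lintegral_lintegral_swap hFm.aemeasurable]
    refine lintegral_congr fun ω => ?_
    have hc : 0 ≤ lam * X i ω := mul_nonneg hlamnn (hXnn i ω)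
    have hBm : MeasurableSet {u : ℝ | lam * ∑ m ∈ Finset.Ico 1 i, X m ω + lam * u * X i ω ≤ x} :=
      measurableSet_le (measurable_const.add ((measurable_id.const_mul lam).mul_const (X i ω)))
        measurable_const
    have h3 : ∀ u : ℝ,
        ({p : ℝ × Ω | lam * ∑ m ∈ Finset.Ico 1 i, X m p.2 + lam * p.1 * X i p.2 ≤ x}).indicator
          (fun p => ENNReal.ofReal (lam * X i p.2)) (u, ω)
        = ({u : ℝ | lam * ∑ m ∈ Finset.Ico 1 i, X m ω + lam * u * X i ω ≤ x}).indicator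
            (fun _ => ENNReal.ofReal (lam * X i ω)) u := by
      intro u
      simp only [Set.indicator_apply, Set.mem_setOf_eq]
    simp only [h3]
    rw [lintegral_indicator_const hBm, Measure.restrict_apply hBm]
    have hseteq : {u : ℝ | lam * ∑ m ∈ Finset.Ico 1 i, X m ω + lam * u * X i ω ≤ x}
        ∩ Set.Ioo (0:ℝ) 1
        = {u : ℝ | u ∈ Set.Ioo (0:ℝ) 1 ∧
            (lam * ∑ m ∈ Finset.Ico 1 i, X m ω) + u * (lam * X i ω) ≤ x} := by
      ext u
      have hring : lam * u * X i ω = u * (lam * X i ω) := by ring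
      simp only [Set.mem_inter_iff, Set.mem_setOf_eq]
      constructor
      · rintro ⟨h1, h2⟩; exact ⟨h2, by linarith⟩
      · rintro ⟨h1, h2⟩; exact ⟨by linarith, h1⟩
    rw [hseteq, key_mul_vol _ _ _ hc]
    congr 2
    rw [Finset.sum_Ico_succ_top h1i, mul_add]
  -- Step C: sum the pieces (telescoping)
  have hL : μ' {ω' | Wi ω' + lam * U ω' * Xs ω' ≤ x}
      = ∫⁻ ω, ENNReal.ofReal (min x (lam * ∑ i ∈ Finset.Icc 1 n, X i ω)) ∂μ := by
    rw [hdecomp, Finset.sum_congr rfl hstep, ← lintegral_finset_sum]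
    · refine lintegral_congr fun ω => ?_
      have hmono : ∀ i, min x (lam * ∑ m ∈ Finset.Ico 1 i, X m ω)
          ≤ min x (lam * ∑ m ∈ Finset.Ico 1 (i+1), X m ω) := fun i =>
        min_le_min le_rfl (mul_le_mul_of_nonneg_left
          (Finset.sum_le_sum_of_subset_of_nonneg
            (Finset.Ico_subset_Ico le_rfl (Nat.le_succ i))
            (fun m _ _ => hXnn m ω)) hlamnn)
      rw [← ENNReal.ofReal_sum_of_nonneg (fun i _ => sub_nonneg.2 (hmono i))]
      congr 1
      rw [← Finset.Ico_add_one_right_eq_Icc]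
      have htel := Finset.sum_Ico_eq_sub
        (f := fun j => min x (lam * ∑ m ∈ Finset.Ico 1 (j+1), X m ω)
                      - min x (lam * ∑ m ∈ Finset.Ico 1 j, X m ω))
        (Nat.succ_le_succ (Nat.zero_le n))
      have htel2 := Finset.sum_range_sub
        (f := fun j => min x (lam * ∑ m ∈ Finset.Ico 1 j, X m ω)) (n+1)
      simp only [Nat.succ_eq_add_one, zero_add] at htel
      rw [htel, htel2, Finset.sum_range_one]
      have h0 : Finset.Ico 1 0 = (∅ : Finset ℕ) := by
        apply Finset.Ico_eq_empty; omega
      simp only [h0, Finset.Ico_self, Finset.sum_empty, mul_zero, min_eq_right hx]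
      ring
    · intro i _
      exact ((Measurable.min measurable_const
          ((Finset.measurable_sum _ fun m _ => hXmeas m).const_mul lam)).sub
        (Measurable.min measurable_const
          ((Finset.measurable_sum _ fun m _ => hXmeas m).const_mul lam))).ennreal_ofReal
  -- Step D: the right-hand side
  have hWmeas : Measurable fun ω => lam * ∑ i ∈ Finset.Icc 1 n, X i ω :=
    (Finset.measurable_sum _ fun m _ => hXmeas m).const_mul lam
  have hWnn : ∀ ω, 0 ≤ lam * ∑ i ∈ Finset.Icc 1 n, X i ω := fun ω =>
    mul_nonneg hlamnn (Finset.sum_nonneg fun m _ => hXnn m ω)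
  have hR : ∫ y in (0:ℝ)..x, (μ {ω | y < lam * ∑ i ∈ Finset.Icc 1 n, X i ω}).toReal
      = (∫⁻ ω, ENNReal.ofReal (min x (lam * ∑ i ∈ Finset.Icc 1 n, X i ω)) ∂μ).toReal := by
    rw [intervalIntegral.integral_of_le hx]
    have hsm : MeasurableSet {p : ℝ × Ω | p.1 < lam * ∑ i ∈ Finset.Icc 1 n, X i p.2} :=
      measurableSet_lt measurable_fst (hWmeas.comp measurable_snd)
    have hmeasy : Measurable fun y => μ {ω | y < lam * ∑ i ∈ Finset.Icc 1 n, X i ω} :=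
      measurable_measure_prodMk_left hsm
    rw [integral_toReal hmeasy.aemeasurable.restrict
      (ae_of_all _ fun y => measure_lt_top μ _)]
    congr 1
    have h1 : ∀ y : ℝ, μ {ω | y < lam * ∑ i ∈ Finset.Icc 1 n, X i ω}
        = ∫⁻ ω, ({p : ℝ × Ω | p.1 < lam * ∑ i ∈ Finset.Icc 1 n, X i p.2}).indicator
            (fun _ => (1:ENNReal)) (y, ω) ∂μ := by
      intro y
      rw [← lintegral_indicator_one (measurableSet_lt measurable_const hWmeas)]
      refine lintegral_congr fun ω => ?_
      simp only [Set.indicator_apply, Set.mem_setOf_eq]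
      rfl
    simp only [h1]
    have hFm : Measurable fun p : ℝ × Ω =>
        ({p : ℝ × Ω | p.1 < lam * ∑ i ∈ Finset.Icc 1 n, X i p.2}).indicator
          (fun _ => (1:ENNReal)) p :=
      Measurable.indicator measurable_const hsm
    rw [lintegral_lintegral_swap hFm.aemeasurable]
    refine lintegral_congr fun ω => ?_
    have h2 : ∀ y : ℝ,
        ({p : ℝ × Ω | p.1 < lam * ∑ i ∈ Finset.Icc 1 n, X i p.2}).indicator
          (fun _ => (1:ENNReal)) (y, ω)
        = (Set.Iio (lam * ∑ i ∈ Finset.Icc 1 n, X i ω)).indicator (fun _ => (1:ENNReal)) y := by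
      intro y
      simp only [Set.indicator_apply, Set.mem_setOf_eq, Set.mem_Iio]
    simp only [h2]
    rw [lintegral_indicator_const measurableSet_Iio, one_mul,
      Measure.restrict_apply measurableSet_Iio, vol_Iio_inter_Ioc _ _ hx (hWnn ω)]
  rw [hL, hR]
end

section
/- Let X_1, X_2, ..., X_n be (possibly dependent) non-negative random variables with 0 < E Σ_{i=1}^n X_i < ∞, let λ = 1/E Σ_{i=1}^n X_i, and set W = λ Σ_{i=1}^n X_i. For each i and x, let W_i(x) be a random variable, independent of all else, with the law of λ Σ_{m=i+1}^{n} X_m conditioned on X_i = x. Let I be a random index, independent of all else, with P(I = i) = λ E X_i; let U be uniform on (0,1) independent of all else; and let X_i^s, independent of all else, have the size-biased distribution with respect to X_i. Then W^e = W_I(X_I^s) + λ U X_I^s has the equilibrium distribution with respect to W. -/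
open MeasureTheory ProbabilityTheory

/-- Auxiliary volume computation: for `0 ≤ lam`, `0 ≤ s`,
`ofReal (lam*s) * vol ({u | a + lam*u*s ≤ x} ∩ (0,1)) = ofReal (min x (a+lam*s) - min x a)`. -/
lemma aux_vol (x lam a s : ℝ) (hlam : 0 ≤ lam) (hs : 0 ≤ s) :
    ENNReal.ofReal (lam * s) *
      MeasureTheory.volume ({u : ℝ | a + lam * u * s ≤ x} ∩ Set.Ioo 0 1)
      = ENNReal.ofReal (min x (a + lam * s) - min x a) := by
  have hb : 0 ≤ lam * s := mul_nonneg hlam hs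
  rcases hb.eq_or_lt with hb0 | hb0
  · simp [← hb0]
  · have hset : {u : ℝ | a + lam * u * s ≤ x} = Set.Iic ((x - a) / (lam * s)) := by
      ext u
      simp only [Set.mem_setOf_eq, Set.mem_Iic]
      have h : a + lam * u * s = a + u * (lam * s) := by ring
      rw [h]
      constructor
      · intro h'; exact (le_div_iff₀ hb0).mpr (by linarith)
      · intro h'; have := (le_div_iff₀ hb0).mp h'; linarith
    rw [hset]
    set c := (x - a) / (lam * s) with hcdef
    have hcb : c * (lam * s) = x - a := div_mul_cancel₀ _ hb0.ne'
    rcases le_or_gt 1 c with hc1 | hc1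
    · have hsub : Set.Ioo (0:ℝ) 1 ⊆ Set.Iic c := fun u hu => le_trans hu.2.le hc1
      rw [Set.inter_eq_self_of_subset_right hsub, Real.volume_Ioo]
      have hxab : a + lam * s ≤ x := by nlinarith
      rw [min_eq_right hxab, min_eq_right (by nlinarith : a ≤ x)]
      norm_num
    · rcases le_or_gt c 0 with hc0 | hc0
      · have hempty : Set.Iic c ∩ Set.Ioo (0:ℝ) 1 = ∅ := by
          ext u
          simp only [Set.mem_inter_iff, Set.mem_Iic, Set.mem_Ioo, Set.mem_empty_iff_false,
            iff_false, not_and]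
          intro h1 h2; linarith
        have hxa : x ≤ a := by nlinarith
        rw [hempty, min_eq_left hxa, min_eq_left (by nlinarith : x ≤ a + lam * s)]
        simp
      · have hinter : Set.Iic c ∩ Set.Ioo (0:ℝ) 1 = Set.Ioc 0 c := by
          ext u
          simp only [Set.mem_inter_iff, Set.mem_Iic, Set.mem_Ioo, Set.mem_Ioc]
          constructor
          · rintro ⟨h1, h2, _⟩; exact ⟨h2, h1⟩
          · rintro ⟨h1, h2⟩; exact ⟨h2, h1, lt_of_le_of_lt h2 hc1⟩
        have hax : a < x := by nlinarith
        have hxab : x ≤ a + lam * s := by nlinarith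
        rw [hinter, Real.volume_Ioc, ← ENNReal.ofReal_mul hb, min_eq_left hxab,
          min_eq_right hax.le]
        congr 1
        rw [sub_zero]
        nlinarith

/-- Telescoping sum over `Icc 1 n`. -/
lemma aux_telescope (G : ℕ → ℝ) (n : ℕ) :
    ∑ i ∈ Finset.Icc 1 n, (G i - G (i + 1)) = G 1 - G (n + 1) := by
  induction n with
  | zero => simp
  | succ m ih =>
    rw [← Finset.insert_Icc_right_eq_Icc_add_one (by omega), Finset.sum_insert (by simp), ih]
    ring

/-- **Remark 4.2, Peköz–Röllin (equilibrium coupling for dependent sums, right version).**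
Let `X 1, …, X n ≥ 0` (possibly dependent) with `0 < E ∑ X i < ∞`, let
`λ = 1/E ∑ X i` and `W = λ ∑_{i=1}^n X i`.  On an auxiliary space let `I` be a random
index with `P(I = i) = λ E X i`, and let `(Wi, Xs)` be such that, on the event `{I = i}`,
the pair `(Wi, Xs)` is distributed as `(λ ∑_{m=i+1}^{n} X m, X i)` under the `X i`-size-biased
measure (equivalently: `Xs = X_I^s` is size-biased from `X_I` and `Wi = W_I(X_I^s)` has the
conditional law of `λ ∑_{m>I} X m` given `X_I = Xs`).  Let `U` be uniform on `(0,1)`,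
independent of `(I, Wi, Xs)`.  Then `Wᵉ = Wi + λ U Xs` has the equilibrium distribution
w.r.t. `W`, i.e. (since `E W = 1`) `P(Wᵉ ≤ x) = ∫_0^x P(W > y) dy` for all `x ≥ 0`. -/
theorem equilibrium_coupling_dependent_sums_rev
    {Ω Ω' : Type*} [MeasurableSpace Ω] [MeasurableSpace Ω']
    (μ : Measure Ω) (μ' : Measure Ω')
    [IsProbabilityMeasure μ] [IsProbabilityMeasure μ']
    (n : ℕ) (X : ℕ → Ω → ℝ) (hXmeas : ∀ i, Measurable (X i))
    (hXnn : ∀ i ω, 0 ≤ X i ω) (hXint : ∀ i, Integrable (X i) μ)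
    (hpos : 0 < ∫ ω, ∑ i ∈ Finset.Icc 1 n, X i ω ∂μ)
    (lam : ℝ) (hlam : lam = (∫ ω, ∑ i ∈ Finset.Icc 1 n, X i ω ∂μ)⁻¹)
    (I : Ω' → ℕ) (Wi Xs U : Ω' → ℝ)
    (hImeas : Measurable I) (hWimeas : Measurable Wi)
    (hXsmeas : Measurable Xs) (hUmeas : Measurable U)
    (hIrange : ∀ ω', I ω' ∈ Finset.Icc 1 n)
    (hI : ∀ i ∈ Finset.Icc 1 n,
      (μ' {ω' | I ω' = i}).toReal = lam * ∫ ω, X i ω ∂μ)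
    (hjoint : ∀ i ∈ Finset.Icc 1 n,
      Measure.map (fun ω' => (Wi ω', Xs ω')) (μ'.restrict {ω' | I ω' = i})
        = Measure.map (fun ω => (lam * ∑ m ∈ Finset.Ioc i n, X m ω, X i ω))
            (μ.withDensity fun ω => ENNReal.ofReal (lam * X i ω)))
    (hU : Measure.map U μ' = volume.restrict (Set.Ioo (0:ℝ) 1))
    (hUindep : IndepFun U (fun ω' => (I ω', Wi ω', Xs ω')) μ') :
    ∀ x : ℝ, 0 ≤ x →
      (μ' {ω' | Wi ω' + lam * U ω' * Xs ω' ≤ x}).toReal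
        = ∫ y in (0:ℝ)..x,
            (μ {ω | y < lam * ∑ i ∈ Finset.Icc 1 n, X i ω}).toReal := by
  intro x hx
  have hlam0 : 0 < lam := by rw [hlam]; exact inv_pos.mpr hpos
  -- basic measurability facts
  have hsummeas : ∀ j : ℕ, Measurable fun ω => lam * ∑ m ∈ Finset.Icc j n, X m ω :=
    fun j => measurable_const.mul (Finset.measurable_sum _ fun m _ => hXmeas m)
  have hminmeas : ∀ j : ℕ, Measurable fun ω => min x (lam * ∑ m ∈ Finset.Icc j n, X m ω) :=
    fun j => measurable_const.min (hsummeas j)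
  have hminnn : ∀ (j : ℕ) ω, 0 ≤ min x (lam * ∑ m ∈ Finset.Icc j n, X m ω) := fun j ω =>
    le_min hx (mul_nonneg hlam0.le (Finset.sum_nonneg fun m _ => hXnn m ω))
  have hminint : ∀ j : ℕ,
      Integrable (fun ω => min x (lam * ∑ m ∈ Finset.Icc j n, X m ω)) μ := by
    intro j
    refine Integrable.mono' (integrable_const x) (hminmeas j).aestronglyMeasurable ?_
    filter_upwards with ω
    rw [Real.norm_eq_abs, abs_of_nonneg (hminnn j ω)]
    exact min_le_left _ _
  have hmono : ∀ (j : ℕ) ω,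
      min x (lam * ∑ m ∈ Finset.Icc (j+1) n, X m ω)
        ≤ min x (lam * ∑ m ∈ Finset.Icc j n, X m ω) := by
    intro j ω
    refine min_le_min le_rfl (mul_le_mul_of_nonneg_left ?_ hlam0.le)
    exact Finset.sum_le_sum_of_subset_of_nonneg
      (Finset.Icc_subset_Icc (by omega) le_rfl) (fun m _ _ => hXnn m ω)
  have hVmeas : Measurable fun ω' => (I ω', Wi ω', Xs ω') :=
    hImeas.prodMk (hWimeas.prodMk hXsmeas)
  haveI : IsProbabilityMeasure (μ'.map fun ω' => (I ω', Wi ω', Xs ω')) :=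
    Measure.isProbabilityMeasure_map hVmeas.aemeasurable
  -- the key per-index identity
  have key : ∀ i : ℕ, 1 ≤ i → i ≤ n →
      μ' ({ω' | I ω' = i} ∩ {ω' | Wi ω' + lam * U ω' * Xs ω' ≤ x})
        = ∫⁻ ω, ENNReal.ofReal (min x (lam * ∑ m ∈ Finset.Icc i n, X m ω)
            - min x (lam * ∑ m ∈ Finset.Icc (i+1) n, X m ω)) ∂μ := by
    intro i hi1 hin
    have hii : i ∈ Finset.Icc 1 n := Finset.mem_Icc.mpr ⟨hi1, hin⟩
    have hPmeas : Measurable fun ω' => (U ω', I ω', Wi ω', Xs ω') := hUmeas.prodMk hVmeas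
    have hprod : μ'.map (fun ω' => (U ω', I ω', Wi ω', Xs ω'))
        = (volume.restrict (Set.Ioo (0:ℝ) 1)).prod
            (μ'.map fun ω' => (I ω', Wi ω', Xs ω')) := by
      rw [← hU]
      exact (indepFun_iff_map_prod_eq_prod_map_map hUmeas.aemeasurable
        hVmeas.aemeasurable).mp hUindep
    have hCm : MeasurableSet
        {p : ℝ × ℕ × ℝ × ℝ | p.2.1 = i ∧ p.2.2.1 + lam * p.1 * p.2.2.2 ≤ x} := by
      have h1 : Measurable fun p : ℝ × ℕ × ℝ × ℝ => p.2.1 := measurable_fst.comp measurable_snd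
      have h2 : Measurable fun p : ℝ × ℕ × ℝ × ℝ => p.2.2.1 + lam * p.1 * p.2.2.2 := by
        fun_prop
      exact (h1 (measurableSet_singleton i)).inter (h2 measurableSet_Iic)
    have hAu : ∀ u : ℝ, MeasurableSet
        {ω | lam * (∑ m ∈ Finset.Ioc i n, X m ω) + lam * u * X i ω ≤ x} := by
      intro u
      have h2 : Measurable fun ω => lam * (∑ m ∈ Finset.Ioc i n, X m ω) + lam * u * X i ω := by
        have := Finset.measurable_sum (Finset.Ioc i n) (fun m _ => hXmeas m)
        fun_prop
      exact h2 measurableSet_Iic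
    calc μ' ({ω' | I ω' = i} ∩ {ω' | Wi ω' + lam * U ω' * Xs ω' ≤ x})
        = μ'.map (fun ω' => (U ω', I ω', Wi ω', Xs ω'))
            {p : ℝ × ℕ × ℝ × ℝ | p.2.1 = i ∧ p.2.2.1 + lam * p.1 * p.2.2.2 ≤ x} := by
          rw [Measure.map_apply hPmeas hCm]
          congr 1
      _ = ∫⁻ u in Set.Ioo (0:ℝ) 1,
            (μ'.map fun ω' => (I ω', Wi ω', Xs ω'))
              (Prod.mk u ⁻¹'
                {p : ℝ × ℕ × ℝ × ℝ | p.2.1 = i ∧ p.2.2.1 + lam * p.1 * p.2.2.2 ≤ x})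
            ∂volume := by
          rw [hprod, Measure.prod_apply hCm]
      _ = ∫⁻ u in Set.Ioo (0:ℝ) 1,
            ∫⁻ ω in {ω | lam * (∑ m ∈ Finset.Ioc i n, X m ω) + lam * u * X i ω ≤ x},
              ENNReal.ofReal (lam * X i ω) ∂μ ∂volume := by
          refine lintegral_congr fun u => ?_
          have hpre : (Prod.mk u ⁻¹'
              {p : ℝ × ℕ × ℝ × ℝ | p.2.1 = i ∧ p.2.2.1 + lam * p.1 * p.2.2.2 ≤ x})
              = {v : ℕ × ℝ × ℝ | v.1 = i ∧ v.2.1 + lam * u * v.2.2 ≤ x} := rfl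
          have hsm : MeasurableSet {v : ℕ × ℝ × ℝ | v.1 = i ∧ v.2.1 + lam * u * v.2.2 ≤ x} := by
            have h1 : Measurable fun v : ℕ × ℝ × ℝ => v.1 := measurable_fst
            have h2 : Measurable fun v : ℕ × ℝ × ℝ => v.2.1 + lam * u * v.2.2 := by fun_prop
            exact (h1 (measurableSet_singleton i)).inter (h2 measurableSet_Iic)
          rw [hpre, Measure.map_apply hVmeas hsm]
          have h1 : (fun ω' => (I ω', Wi ω', Xs ω')) ⁻¹'
              {v : ℕ × ℝ × ℝ | v.1 = i ∧ v.2.1 + lam * u * v.2.2 ≤ x}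
              = {ω' | Wi ω' + lam * u * Xs ω' ≤ x} ∩ {ω' | I ω' = i} := by
            ext ω'
            simp only [Set.mem_preimage, Set.mem_setOf_eq, Set.mem_inter_iff]
            exact and_comm
          have hq' : MeasurableSet {ω' | Wi ω' + lam * u * Xs ω' ≤ x} := by
            have h2 : Measurable fun ω' => Wi ω' + lam * u * Xs ω' := by fun_prop
            exact h2 measurableSet_Iic
          rw [h1, ← Measure.restrict_apply hq']
          have hqm : MeasurableSet {q : ℝ × ℝ | q.1 + lam * u * q.2 ≤ x} := by
            have h2 : Measurable fun q : ℝ × ℝ => q.1 + lam * u * q.2 := by fun_prop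
            exact h2 measurableSet_Iic
          have h2 : {ω' | Wi ω' + lam * u * Xs ω' ≤ x}
              = (fun ω' => (Wi ω', Xs ω')) ⁻¹' {q : ℝ × ℝ | q.1 + lam * u * q.2 ≤ x} := rfl
          have hLmeas : Measurable fun ω => (lam * ∑ m ∈ Finset.Ioc i n, X m ω, X i ω) := by
            have := Finset.measurable_sum (Finset.Ioc i n) (fun m _ => hXmeas m)
            fun_prop
          rw [h2, ← Measure.map_apply (hWimeas.prodMk hXsmeas) hqm, hjoint i hii,
            Measure.map_apply hLmeas hqm]
          have h3 : (fun ω => (lam * ∑ m ∈ Finset.Ioc i n, X m ω, X i ω)) ⁻¹'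
              {q : ℝ × ℝ | q.1 + lam * u * q.2 ≤ x}
              = {ω | lam * (∑ m ∈ Finset.Ioc i n, X m ω) + lam * u * X i ω ≤ x} := rfl
          rw [h3, withDensity_apply _ (hAu u)]
      _ = ∫⁻ ω, ∫⁻ u in Set.Ioo (0:ℝ) 1,
            Set.indicator {p : ℝ × Ω | lam * (∑ m ∈ Finset.Ioc i n, X m p.2)
                + lam * p.1 * X i p.2 ≤ x}
              (fun p => ENNReal.ofReal (lam * X i p.2)) (u, ω) ∂volume ∂μ := by
          have hEmeas : MeasurableSet {p : ℝ × Ω | lam * (∑ m ∈ Finset.Ioc i n, X m p.2)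
              + lam * p.1 * X i p.2 ≤ x} := by
            have hsum : Measurable fun ω : Ω => ∑ m ∈ Finset.Ioc i n, X m ω :=
              Finset.measurable_sum _ fun m _ => hXmeas m
            have h2 : Measurable fun p : ℝ × Ω =>
                lam * (∑ m ∈ Finset.Ioc i n, X m p.2) + lam * p.1 * X i p.2 := by
              have hXi := hXmeas i
              fun_prop
            exact h2 measurableSet_Iic
          have hFmeas : Measurable (Function.uncurry fun (u : ℝ) (ω : Ω) =>
              Set.indicator {p : ℝ × Ω | lam * (∑ m ∈ Finset.Ioc i n, X m p.2)
                  + lam * p.1 * X i p.2 ≤ x}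
                (fun p => ENNReal.ofReal (lam * X i p.2)) (u, ω)) := by
            have hg : Measurable fun p : ℝ × Ω => ENNReal.ofReal (lam * X i p.2) := by
              have hXi := hXmeas i
              fun_prop
            exact hg.indicator hEmeas
          rw [← lintegral_lintegral_swap hFmeas.aemeasurable]
          refine lintegral_congr fun u => ?_
          rw [← lintegral_indicator (hAu u)]
          refine lintegral_congr fun ω => ?_
          simp only [Set.indicator_apply, Set.mem_setOf_eq]
      _ = ∫⁻ ω, ENNReal.ofReal (lam * X i ω) *
            volume ({u : ℝ | lam * (∑ m ∈ Finset.Ioc i n, X m ω) + lam * u * X i ω ≤ x}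
              ∩ Set.Ioo 0 1) ∂μ := by
          refine lintegral_congr fun ω => ?_
          have hSu : MeasurableSet
              {u : ℝ | lam * (∑ m ∈ Finset.Ioc i n, X m ω) + lam * u * X i ω ≤ x} := by
            have h2 : Measurable fun u : ℝ =>
                lam * (∑ m ∈ Finset.Ioc i n, X m ω) + lam * u * X i ω := by fun_prop
            exact h2 measurableSet_Iic
          have hstep : ∀ u : ℝ, Set.indicator {p : ℝ × Ω |
              lam * (∑ m ∈ Finset.Ioc i n, X m p.2) + lam * p.1 * X i p.2 ≤ x}
              (fun p => ENNReal.ofReal (lam * X i p.2)) (u, ω)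
              = Set.indicator {u : ℝ |
                  lam * (∑ m ∈ Finset.Ioc i n, X m ω) + lam * u * X i ω ≤ x}
                (fun _ => ENNReal.ofReal (lam * X i ω)) u := by
            intro u
            simp only [Set.indicator_apply, Set.mem_setOf_eq]
          rw [lintegral_congr hstep, lintegral_indicator hSu, Measure.restrict_restrict hSu,
            setLIntegral_const]
      _ = ∫⁻ ω, ENNReal.ofReal (min x (lam * ∑ m ∈ Finset.Icc i n, X m ω)
            - min x (lam * ∑ m ∈ Finset.Icc (i+1) n, X m ω)) ∂μ := by
          refine lintegral_congr fun ω => ?_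
          have haux := aux_vol x lam (lam * (∑ m ∈ Finset.Ioc i n, X m ω)) (X i ω)
            hlam0.le (hXnn i ω)
          rw [haux]
          have e1 : lam * (∑ m ∈ Finset.Ioc i n, X m ω) + lam * X i ω
              = lam * ∑ m ∈ Finset.Icc i n, X m ω := by
            rw [Finset.Icc_eq_cons_Ioc hin, Finset.sum_cons]
            ring
          have e2 : lam * (∑ m ∈ Finset.Ioc i n, X m ω)
              = lam * ∑ m ∈ Finset.Icc (i+1) n, X m ω := by
            rw [Finset.Icc_add_one_left_eq_Ioc]
          rw [e1, e2]
  -- per-index identity, real version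
  have keyR : ∀ i ∈ Finset.Icc 1 n,
      (μ' ({ω' | I ω' = i} ∩ {ω' | Wi ω' + lam * U ω' * Xs ω' ≤ x})).toReal
        = ∫ ω, (min x (lam * ∑ m ∈ Finset.Icc i n, X m ω)
            - min x (lam * ∑ m ∈ Finset.Icc (i+1) n, X m ω)) ∂μ := by
    intro i hi
    obtain ⟨hi1, hin⟩ := Finset.mem_Icc.mp hi
    rw [key i hi1 hin]
    exact (integral_eq_lintegral_of_nonneg_ae
      (Filter.Eventually.of_forall fun ω => sub_nonneg.mpr (hmono i ω))
      ((hminmeas i).sub (hminmeas (i+1))).aestronglyMeasurable).symm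
  -- decompose according to the value of I
  have hBmeas : MeasurableSet {ω' | Wi ω' + lam * U ω' * Xs ω' ≤ x} := by
    have h2 : Measurable fun ω' => Wi ω' + lam * U ω' * Xs ω' := by fun_prop
    exact h2 measurableSet_Iic
  have hcov : {ω' | Wi ω' + lam * U ω' * Xs ω' ≤ x}
      = ⋃ i ∈ Finset.Icc 1 n,
          ({ω' | I ω' = i} ∩ {ω' | Wi ω' + lam * U ω' * Xs ω' ≤ x}) := by
    ext ω'
    simp only [Set.mem_iUnion, Set.mem_inter_iff, Set.mem_setOf_eq, exists_prop]
    constructor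
    · intro h; exact ⟨I ω', hIrange ω', rfl, h⟩
    · rintro ⟨j, _, _, h⟩; exact h
  have hsum : μ' {ω' | Wi ω' + lam * U ω' * Xs ω' ≤ x}
      = ∑ i ∈ Finset.Icc 1 n,
          μ' ({ω' | I ω' = i} ∩ {ω' | Wi ω' + lam * U ω' * Xs ω' ≤ x}) := by
    conv_lhs => rw [hcov]
    refine measure_biUnion_finset (f := fun i =>
      {ω' | I ω' = i} ∩ {ω' | Wi ω' + lam * U ω' * Xs ω' ≤ x}) ?_ fun i _ =>
      ((hImeas (measurableSet_singleton i)).inter hBmeas)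
    intro a _ b _ hab
    refine Set.disjoint_left.mpr ?_
    rintro ω' ⟨ha, _⟩ ⟨hb, _⟩
    exact hab (ha ▸ hb ▸ rfl)
  calc (μ' {ω' | Wi ω' + lam * U ω' * Xs ω' ≤ x}).toReal
      = ∑ i ∈ Finset.Icc 1 n,
          (μ' ({ω' | I ω' = i} ∩ {ω' | Wi ω' + lam * U ω' * Xs ω' ≤ x})).toReal := by
        rw [hsum, ENNReal.toReal_sum fun i _ => measure_ne_top μ' _]
    _ = ∑ i ∈ Finset.Icc 1 n, ∫ ω, (min x (lam * ∑ m ∈ Finset.Icc i n, X m ω)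
          - min x (lam * ∑ m ∈ Finset.Icc (i+1) n, X m ω)) ∂μ :=
        Finset.sum_congr rfl keyR
    _ = ∫ ω, ∑ i ∈ Finset.Icc 1 n, (min x (lam * ∑ m ∈ Finset.Icc i n, X m ω)
          - min x (lam * ∑ m ∈ Finset.Icc (i+1) n, X m ω)) ∂μ :=
        (integral_finset_sum _ fun i _ => (hminint i).sub (hminint (i+1))).symm
    _ = ∫ ω, min x (lam * ∑ m ∈ Finset.Icc 1 n, X m ω) ∂μ := by
        refine integral_congr_ae (Filter.Eventually.of_forall fun ω => ?_)
        dsimp only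
        rw [aux_telescope (fun j => min x (lam * ∑ m ∈ Finset.Icc j n, X m ω)) n]
        have : Finset.Icc (n+1) n = ∅ := Finset.Icc_eq_empty (by omega)
        rw [this]
        simp [min_eq_right hx]
    _ = ∫ y in Set.Ioi (0:ℝ),
          (μ {a | y < min x (lam * ∑ m ∈ Finset.Icc 1 n, X m a)}).toReal :=
        (hminint 1).integral_eq_integral_meas_lt
          (Filter.Eventually.of_forall fun ω => hminnn 1 ω)
    _ = ∫ y in Set.Ioo (0:ℝ) x,
          (μ {ω | y < lam * ∑ i ∈ Finset.Icc 1 n, X i ω}).toReal := by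
        have hpt : ∀ y ∈ Set.Ioi (0:ℝ),
            (μ {a | y < min x (lam * ∑ m ∈ Finset.Icc 1 n, X m a)}).toReal
              = Set.indicator (Set.Ioo 0 x)
                  (fun y => (μ {ω | y < lam * ∑ i ∈ Finset.Icc 1 n, X i ω}).toReal) y := by
          intro y hy
          rcases lt_or_ge y x with hyx | hyx
          · rw [Set.indicator_of_mem (Set.mem_Ioo.mpr ⟨hy, hyx⟩)]
            congr 2
            ext a
            simp only [Set.mem_setOf_eq, lt_min_iff]
            exact and_iff_right hyx
          · rw [Set.indicator_of_notMem (fun h => absurd (Set.mem_Ioo.mp h).2 (not_lt.mpr hyx))]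
            have : {a : Ω | y < min x (lam * ∑ m ∈ Finset.Icc 1 n, X m a)} = ∅ := by
              ext a
              simp only [Set.mem_setOf_eq, Set.mem_empty_iff_false, iff_false, not_lt]
              exact le_trans (min_le_left _ _) hyx
            rw [this]
            simp
        rw [setIntegral_congr_fun measurableSet_Ioi hpt,
          setIntegral_indicator measurableSet_Ioo,
          Set.inter_eq_self_of_subset_right Set.Ioo_subset_Ioi_self]
    _ = ∫ y in (0:ℝ)..x,
          (μ {ω | y < lam * ∑ i ∈ Finset.Icc 1 n, X i ω}).toReal := by
        rw [intervalIntegral.integral_of_le hx, integral_Ioc_eq_integral_Ioo]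
end
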